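/- arXiv:1602.06597 — 6 statements merged into one kernel-verified Lean document; each statement's English description precedes it below -/
import Mathlib

section
/- Let M be a subset of ℬ(χ_1,…,χ_k) such that for every subset J ⊆ {1,…,k} the subgroup {m ∈ 𝒢(χ_1,…,χ_k) : supp(m) ⊆ J} of ℤ^k is generated (as an abelian group) by M_J := {m ∈ M : supp(m) ⊆ J}. Then {x^m : m ∈ M} is a separating set among the G-invariant polynomials on F^k. -/
open MvPolynomial

/-- A polynomial `h` on `F^ι` is invariant under the diagonal action of `G`
given by the characters `χ i : G → Fˣ`. -/
def IsInvariantPoly {F : Type*} [Field F] {G : Type*} [CommGroup G]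
    {ι : Type*} [Fintype ι] (χ : ι → G →* Fˣ) (h : MvPolynomial ι F) : Prop :=
  ∀ (g : G) (v : ι → F), eval (fun i => ((χ i g : Fˣ) : F) * v i) h = eval v h

/-- `S` is a separating set of `G`-invariant polynomials on `F^ι`. -/
def IsSeparatingSet {F : Type*} [Field F] {G : Type*} [CommGroup G]
    {ι : Type*} [Fintype ι] (χ : ι → G →* Fˣ) (S : Set (MvPolynomial ι F)) : Prop :=
  ∀ v w : ι → F, (∀ f ∈ S, eval v f = eval w f) →
    ∀ h : MvPolynomial ι F, IsInvariantPoly χ h → eval v h = eval w h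

section Aux

variable {F : Type*} [Field F] {k : ℕ}

private lemma bind₁_scale_monomial (c : Fin k → F) (d : Fin k →₀ ℕ) (a : F) :
    bind₁ (fun i => C (c i) * X i) (monomial d a) =
      monomial d ((∏ i, c i ^ d i) * a) := by
  have hcd : ∏ i ∈ d.support, c i ^ d i = ∏ i, c i ^ d i := by
    apply Finset.prod_subset (Finset.subset_univ _)
    intro i _ hi
    simp [Finsupp.notMem_support_iff.mp hi]
  rw [bind₁_monomial, monomial_eq, Finsupp.prod]
  rw [Finset.prod_congr rfl (fun i _ => mul_pow (C (c i)) (X i) (d i)),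
    Finset.prod_mul_distrib]
  simp_rw [← C_pow]
  rw [← map_prod C (fun i => c i ^ d i), hcd, map_mul]
  ring

private lemma coeff_bind₁_scale (c : Fin k → F) (h : MvPolynomial (Fin k) F) (d : Fin k →₀ ℕ) :
    coeff d (bind₁ (fun i => C (c i) * X i) h) = (∏ i, c i ^ d i) * coeff d h := by
  conv_lhs => rw [h.as_sum, map_sum]
  simp_rw [bind₁_scale_monomial]
  rw [coeff_sum]
  simp_rw [coeff_monomial]
  rw [Finset.sum_ite_eq' h.support d]
  by_cases hd : d ∈ h.support
  · simp [hd]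
  · simp [hd, MvPolynomial.notMem_support_iff.mp hd]

private lemma eval_bind₁' {σ τ : Type*} (x : τ → F) (g : σ → MvPolynomial τ F)
    (φ : MvPolynomial σ F) :
    eval x (bind₁ g φ) = eval (fun i => eval x (g i)) φ := by
  calc eval x (bind₁ g φ) = eval₂Hom (RingHom.id F) x (bind₁ g φ) := rfl
    _ = eval₂Hom (RingHom.id F) (fun i => eval₂Hom (RingHom.id F) x (g i)) φ :=
        eval₂Hom_bind₁ _ _ _ _
    _ = _ := rfl

private lemma coeff_invariant {G : Type*} [CommGroup G] [Infinite F] (χ : Fin k → G →* Fˣ)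
    (h : MvPolynomial (Fin k) F) (hinv : IsInvariantPoly χ h)
    (d : Fin k →₀ ℕ) (hd : coeff d h ≠ 0) (g : G) :
    ∏ i, (χ i g) ^ (d i) = (1 : Fˣ) := by
  set c : Fin k → F := fun i => ((χ i g : Fˣ) : F) with hc
  have key : bind₁ (fun i => C (c i) * X i) h = h := by
    apply MvPolynomial.funext
    intro x
    rw [eval_bind₁']
    simp only [map_mul, eval_C, eval_X]
    exact hinv g x
  have h2 : (∏ i, c i ^ d i) * coeff d h = coeff d h := by
    rw [← coeff_bind₁_scale, key]
  have h3 : (∏ i, c i ^ d i) = 1 :=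
    mul_right_cancel₀ hd (h2.trans (one_mul (coeff d h)).symm)
  refine Units.ext ?_
  rw [Units.val_one, ← h3]
  push_cast
  simp [hc]

variable {G : Type*} [CommGroup G]

private lemma zero_prop (χ : Fin k → G →* Fˣ) (M : Set (Fin k → ℕ))
    (hgen : ∀ J : Finset (Fin k),
      (↑(AddSubgroup.closure ((fun (m : Fin k → ℕ) (i : Fin k) => ((m i : ℤ))) ''
          {m ∈ M | ∀ i, m i ≠ 0 → i ∈ J})) : Set (Fin k → ℤ))
        = {m : Fin k → ℤ | (∀ g : G, ∏ i, (χ i g) ^ (m i) = 1) ∧ ∀ i, m i ≠ 0 → i ∈ J})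
    (v w : Fin k → F)
    (hvw : ∀ a ∈ M, ∏ i, v i ^ a i = ∏ i, w i ^ a i)
    (m : Fin k → ℕ) (hm : ∀ g : G, ∏ i, (χ i g) ^ (m i) = 1)
    (i0 : Fin k) (hi0 : m i0 ≠ 0) (hv0 : v i0 = 0) :
    ∃ j, m j ≠ 0 ∧ w j = 0 := by
  by_contra hcon
  push_neg at hcon
  set J : Finset (Fin k) := Finset.univ.filter (fun i => m i ≠ 0) with hJ
  have hmem : (fun i => ((m i : ℤ))) ∈
      (AddSubgroup.closure ((fun (m : Fin k → ℕ) (i : Fin k) => ((m i : ℤ))) ''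
        {m ∈ M | ∀ i, m i ≠ 0 → i ∈ J}) : AddSubgroup (Fin k → ℤ)) := by
    rw [← SetLike.mem_coe, hgen J]
    constructor
    · intro g
      simpa [zpow_natCast] using hm g
    · intro i hi
      simp only [hJ, Finset.mem_filter, Finset.mem_univ, true_and]
      exact_mod_cast fun h => hi (by simp [h])
  have hker : (AddSubgroup.closure ((fun (m : Fin k → ℕ) (i : Fin k) => ((m i : ℤ))) ''
        {m ∈ M | ∀ i, m i ≠ 0 → i ∈ J})) ≤
      (Pi.evalAddMonoidHom (fun _ : Fin k => ℤ) i0).ker := by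
    rw [AddSubgroup.closure_le]
    rintro _ ⟨a, ⟨haM, haJ⟩, rfl⟩
    have hai0 : a i0 = 0 := by
      by_contra hai0
      have hv : ∏ i, v i ^ a i = 0 :=
        Finset.prod_eq_zero (Finset.mem_univ i0) (by rw [hv0, zero_pow hai0])
      have hw : ∏ i, w i ^ a i ≠ 0 := by
        apply Finset.prod_ne_zero_iff.mpr
        intro j _
        by_cases haj : a j = 0
        · simp [haj]
        · have hj : j ∈ J := haJ j haj
          have hmj : m j ≠ 0 := by simpa [hJ] using hj
          exact pow_ne_zero _ (hcon j hmj)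
      exact hw ((hvw a haM) ▸ hv)
    show (fun i => ((a i : ℤ))) ∈ (Pi.evalAddMonoidHom (fun _ : Fin k => ℤ) i0).ker
    simp [AddMonoidHom.mem_ker, Pi.evalAddMonoidHom, hai0]
  have hmem2 := hker hmem
  rw [AddMonoidHom.mem_ker] at hmem2
  have h0 : ((m i0 : ℤ)) = 0 := hmem2
  exact hi0 (by exact_mod_cast h0)

private lemma coe_prod_pow (x : Fin k → Fˣ) (a : Fin k → ℕ) :
    ((∏ i, x i ^ a i : Fˣ) : F) = ∏ i, ((x i : F)) ^ a i := by
  push_cast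
  rfl

private lemma key_lemma_units (χ : Fin k → G →* Fˣ) (M : Set (Fin k → ℕ))
    (hgen : ∀ J : Finset (Fin k),
      (↑(AddSubgroup.closure ((fun (m : Fin k → ℕ) (i : Fin k) => ((m i : ℤ))) ''
          {m ∈ M | ∀ i, m i ≠ 0 → i ∈ J})) : Set (Fin k → ℤ))
        = {m : Fin k → ℤ | (∀ g : G, ∏ i, (χ i g) ^ (m i) = 1) ∧ ∀ i, m i ≠ 0 → i ∈ J})
    (v w : Fin k → F)
    (hvw : ∀ a ∈ M, ∏ i, v i ^ a i = ∏ i, w i ^ a i)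
    (m : Fin k → ℕ) (hm : ∀ g : G, ∏ i, (χ i g) ^ (m i) = 1)
    (hv : ∀ i, m i ≠ 0 → v i ≠ 0) (hw : ∀ i, m i ≠ 0 → w i ≠ 0) :
    ∏ i, v i ^ m i = ∏ i, w i ^ m i := by
  classical
  set J : Finset (Fin k) := Finset.univ.filter (fun i => m i ≠ 0) with hJ
  set u : Fin k → Fˣ := fun i => if h : v i = 0 then 1 else Units.mk0 (v i) h with hu
  set t : Fin k → Fˣ := fun i => if h : w i = 0 then 1 else Units.mk0 (w i) h with ht
  have hucoe : ∀ (a : Fin k → ℕ), (∀ i, a i ≠ 0 → v i ≠ 0) →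
      ∏ i, ((u i : F)) ^ a i = ∏ i, v i ^ a i := by
    intro a ha
    refine Finset.prod_congr rfl fun i _ => ?_
    by_cases hai : a i = 0
    · simp [hai]
    · have : v i ≠ 0 := ha i hai
      rw [hu]
      simp [this]
  have htcoe : ∀ (a : Fin k → ℕ), (∀ i, a i ≠ 0 → w i ≠ 0) →
      ∏ i, ((t i : F)) ^ a i = ∏ i, w i ^ a i := by
    intro a ha
    refine Finset.prod_congr rfl fun i _ => ?_
    by_cases hai : a i = 0
    · simp [hai]
    · have : w i ≠ 0 := ha i hai
      rw [ht]
      simp [this]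
  let S : AddSubgroup (Fin k → ℤ) :=
  { carrier := {n | ∏ i, u i ^ n i = ∏ i, t i ^ n i}
    zero_mem' := by simp
    add_mem' := by
      intro a b ha hb
      simp only [Set.mem_setOf_eq, Pi.add_apply] at *
      simp_rw [zpow_add]
      rw [Finset.prod_mul_distrib, Finset.prod_mul_distrib, ha, hb]
    neg_mem' := by
      intro a ha
      simp only [Set.mem_setOf_eq, Pi.neg_apply] at *
      simp_rw [zpow_neg]
      rw [Finset.prod_inv_distrib, Finset.prod_inv_distrib, ha] }
  have hclos : AddSubgroup.closure ((fun (m : Fin k → ℕ) (i : Fin k) => ((m i : ℤ))) ''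
          {m ∈ M | ∀ i, m i ≠ 0 → i ∈ J}) ≤ S := by
    rw [AddSubgroup.closure_le]
    rintro _ ⟨a, ⟨haM, haJ⟩, rfl⟩
    show ∏ i, u i ^ ((a i : ℤ)) = ∏ i, t i ^ ((a i : ℤ))
    simp_rw [zpow_natCast]
    refine Units.ext ?_
    rw [coe_prod_pow, coe_prod_pow]
    have hav : ∀ i, a i ≠ 0 → v i ≠ 0 := by
      intro i hai
      have : i ∈ J := haJ i hai
      exact hv i (by simpa [hJ] using this)
    have haw : ∀ i, a i ≠ 0 → w i ≠ 0 := by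
      intro i hai
      have : i ∈ J := haJ i hai
      exact hw i (by simpa [hJ] using this)
    rw [hucoe a hav, htcoe a haw]
    exact hvw a haM
  have hmem : (fun i => ((m i : ℤ))) ∈ AddSubgroup.closure
      ((fun (m : Fin k → ℕ) (i : Fin k) => ((m i : ℤ))) ''
        {m ∈ M | ∀ i, m i ≠ 0 → i ∈ J}) := by
    rw [← SetLike.mem_coe, hgen J]
    constructor
    · intro g
      simpa [zpow_natCast] using hm g
    · intro i hi
      simp only [hJ, Finset.mem_filter, Finset.mem_univ, true_and]
      exact_mod_cast fun h => hi (by simp [h])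
  have hS := hclos hmem
  have huts : ∏ i, u i ^ ((m i : ℤ)) = ∏ i, t i ^ ((m i : ℤ)) := hS
  simp_rw [zpow_natCast] at huts
  have hcoe := congrArg (fun x : Fˣ => (x : F)) huts
  rw [coe_prod_pow, coe_prod_pow, hucoe m hv, htcoe m hw] at hcoe
  exact hcoe

private lemma key_lemma (χ : Fin k → G →* Fˣ) (M : Set (Fin k → ℕ))
    (hgen : ∀ J : Finset (Fin k),
      (↑(AddSubgroup.closure ((fun (m : Fin k → ℕ) (i : Fin k) => ((m i : ℤ))) ''
          {m ∈ M | ∀ i, m i ≠ 0 → i ∈ J})) : Set (Fin k → ℤ))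
        = {m : Fin k → ℤ | (∀ g : G, ∏ i, (χ i g) ^ (m i) = 1) ∧ ∀ i, m i ≠ 0 → i ∈ J})
    (v w : Fin k → F)
    (hvw : ∀ a ∈ M, ∏ i, v i ^ a i = ∏ i, w i ^ a i)
    (m : Fin k → ℕ) (hm : ∀ g : G, ∏ i, (χ i g) ^ (m i) = 1) :
    ∏ i, v i ^ m i = ∏ i, w i ^ m i := by
  by_cases hv : ∃ i, m i ≠ 0 ∧ v i = 0
  · obtain ⟨i0, hi0, hv0⟩ := hv
    obtain ⟨j, hj, hw0⟩ := zero_prop χ M hgen v w hvw m hm i0 hi0 hv0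
    rw [Finset.prod_eq_zero (Finset.mem_univ i0) (by rw [hv0, zero_pow hi0]),
        Finset.prod_eq_zero (Finset.mem_univ j) (by rw [hw0, zero_pow hj])]
  by_cases hw : ∃ i, m i ≠ 0 ∧ w i = 0
  · obtain ⟨i0, hi0, hw0⟩ := hw
    obtain ⟨j, hj, hv0⟩ :=
      zero_prop χ M hgen w v (fun a ha => (hvw a ha).symm) m hm i0 hi0 hw0
    rw [Finset.prod_eq_zero (Finset.mem_univ j) (by rw [hv0, zero_pow hj]),
        Finset.prod_eq_zero (Finset.mem_univ i0) (by rw [hw0, zero_pow hi0])]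
  push_neg at hv hw
  exact key_lemma_units χ M hgen v w hvw m hm
    (fun i hi => hv i hi) (fun i hi => hw i hi)

end Aux

/-- If for every subset `J ⊆ {1,…,k}` the subgroup `{m ∈ 𝓖(χ) : supp m ⊆ J}` of `ℤ^k`
is generated by `M_J := {m ∈ M : supp m ⊆ J}`, then `{x^m : m ∈ M}` is a separating set
among the `G`-invariant polynomials on `F^k`. -/
theorem separating_of_generates
    {F : Type*} [Field F] [IsAlgClosed F] {G : Type*} [CommGroup G] [Fintype G]
    (hchar : ¬ (ringChar F ∣ Fintype.card G))
    {k : ℕ} (χ : Fin k → G →* Fˣ)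
    (M : Set (Fin k → ℕ))
    (hM : ∀ m ∈ M, ∀ g : G, ∏ i, (χ i g) ^ (m i) = 1)
    (hgen : ∀ J : Finset (Fin k),
      (↑(AddSubgroup.closure ((fun (m : Fin k → ℕ) (i : Fin k) => ((m i : ℤ))) ''
          {m ∈ M | ∀ i, m i ≠ 0 → i ∈ J})) : Set (Fin k → ℤ))
        = {m : Fin k → ℤ | (∀ g : G, ∏ i, (χ i g) ^ (m i) = 1) ∧ ∀ i, m i ≠ 0 → i ∈ J}) :
    IsSeparatingSet χ ((fun m : Fin k → ℕ => ∏ i, (X i : MvPolynomial (Fin k) F) ^ m i) '' M) := by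
  intro v w hS h hinv
  have hvw : ∀ a ∈ M, ∏ i, v i ^ a i = ∏ i, w i ^ a i := by
    intro a ha
    have := hS _ ⟨a, ha, rfl⟩
    simpa using this
  rw [eval_eq', eval_eq']
  apply Finset.sum_congr rfl
  intro d hd
  have hc : ∀ g : G, ∏ i, (χ i g) ^ ((fun i => d i) i) = 1 :=
    coeff_invariant χ h hinv d (MvPolynomial.mem_support_iff.mp hd)
  have := key_lemma χ M hgen v w hvw (fun i => d i) hc
  rw [this]
end

section
/- Let G be a finite abelian group, N ≥ 1 an integer, and d a positive integer. Suppose that for every positive integer s ≤ N and every sequence a_1,…,a_s of pairwise distinct elements of G, the abelian group 𝒢(a_1,…,a_s) is generated by {m ∈ ℬ(a_1,…,a_s) : |m| ≤ d}. Then for every positive integer s ≤ N and every sequence a_1,…,a_s of (not necessarily distinct) elements of G, the abelian group 𝒢(a_1,…,a_s) is generated by {m ∈ ℬ(a_1,…,a_s) : |m| ≤ d}. -/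
/-- For a sequence `a : Fin k → G` in an additive abelian group, this says that the
abelian group `𝓖(a_1,…,a_k) = {m ∈ ℤ^k : Σ m_i • a_i = 0}` is generated by the set
`{m ∈ 𝓑(a_1,…,a_k) : |m| ≤ d}` of zero-sum vectors `m ∈ ℕ^k` of length at most `d`. -/
def ZeroSumGeneratedBy {G : Type*} [AddCommGroup G] {k : ℕ} (a : Fin k → G) (d : ℕ) : Prop :=
  (↑(AddSubgroup.closure ((fun (m : Fin k → ℕ) (i : Fin k) => ((m i : ℤ))) ''
      {m : Fin k → ℕ | (∑ i, m i • a i = 0) ∧ ∑ i, m i ≤ d})) : Set (Fin k → ℤ))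
    = {m : Fin k → ℤ | ∑ i, m i • a i = 0}

/-- The homomorphism `m ↦ ∑ m i • a i`. -/
private def sumSmulHom {G : Type*} [AddCommGroup G] {k : ℕ} (a : Fin k → G) :
    (Fin k → ℤ) →+ G where
  toFun m := ∑ i, m i • a i
  map_zero' := by simp
  map_add' x y := by
    simp [add_smul, Finset.sum_add_distrib]

private lemma zsgb_iff {G : Type*} [AddCommGroup G] {k : ℕ} (a : Fin k → G) (d : ℕ) :
    ZeroSumGeneratedBy a d ↔
      AddSubgroup.closure ((fun (m : Fin k → ℕ) (i : Fin k) => ((m i : ℤ))) ''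
        {m : Fin k → ℕ | (∑ i, m i • a i = 0) ∧ ∑ i, m i ≤ d}) = (sumSmulHom a).ker := by
  rw [ZeroSumGeneratedBy]
  constructor
  · intro h
    apply SetLike.coe_injective
    rw [h]; rfl
  · intro h
    rw [h]; rfl

private lemma ord_le {G : Type*} [AddCommGroup G] [Fintype G] {d : ℕ}
    (g : G) (h : ZeroSumGeneratedBy (fun _ : Fin 1 => g) d) : addOrderOf g ≤ d := by
  by_contra hlt
  push_neg at hlt
  set n := addOrderOf g with hn
  have hpos : 0 < n := addOrderOf_pos g
  -- the vector (n) is a zero-sum vector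
  have hmem : (fun _ : Fin 1 => (n : ℤ)) ∈
      (↑(AddSubgroup.closure ((fun (m : Fin 1 → ℕ) (i : Fin 1) => ((m i : ℤ))) ''
        {m : Fin 1 → ℕ | (∑ i, m i • (fun _ : Fin 1 => g) i = 0) ∧ ∑ i, m i ≤ d})) :
        Set (Fin 1 → ℤ)) := by
    rw [h]
    simp only [Set.mem_setOf_eq, Fin.sum_univ_one, natCast_zsmul]
    exact addOrderOf_nsmul_eq_zero g
  -- but every generator has first coordinate 0
  have hker : AddSubgroup.closure ((fun (m : Fin 1 → ℕ) (i : Fin 1) => ((m i : ℤ))) ''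
        {m : Fin 1 → ℕ | (∑ i, m i • (fun _ : Fin 1 => g) i = 0) ∧ ∑ i, m i ≤ d}) ≤
      (Pi.evalAddMonoidHom (fun _ : Fin 1 => ℤ) 0).ker := by
    rw [AddSubgroup.closure_le]
    rintro _ ⟨u, ⟨hu0, hud⟩, rfl⟩
    simp only [Fin.sum_univ_one] at hu0 hud
    have hdvd : n ∣ u 0 := addOrderOf_dvd_of_nsmul_eq_zero hu0
    have : u 0 = 0 := by
      rcases Nat.eq_zero_or_pos (u 0) with h0 | h0
      · exact h0
      · exact absurd (Nat.le_of_dvd h0 hdvd) (by omega)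
    simp [AddMonoidHom.mem_ker, this]
  have := hker hmem
  simp [AddMonoidHom.mem_ker] at this
  omega


private lemma sum_single_smul {ι M R : Type*} [Fintype ι] [DecidableEq ι] [Semiring R]
    [AddCommMonoid M] [Module R M] (p : ι) (x : R) (b : ι → M) :
    ∑ k, (Pi.single p x : ι → R) k • b k = x • b p := by
  rw [Finset.sum_eq_single p]
  · rw [Pi.single_eq_same]
  · intro b' _ hb'
    rw [Pi.single_eq_of_ne hb', zero_smul]
  · intro h
    exact absurd (Finset.mem_univ p) h

private lemma step {G : Type*} [AddCommGroup G] {t d : ℕ} (a : Fin (t + 1) → G)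
    (i j : Fin (t + 1)) (hij : i ≠ j) (haij : a i = a j)
    (hnpos : 0 < addOrderOf (a j)) (hnd : addOrderOf (a j) ≤ d)
    (hprev : ZeroSumGeneratedBy (a ∘ j.succAbove) d) :
    ZeroSumGeneratedBy a d := by
  obtain ⟨i', hi'⟩ := Fin.exists_succAbove_eq hij
  subst hi'
  set i := j.succAbove i' with hidef
  set n := addOrderOf (a j) with hn
  set castF : (Fin (t + 1) → ℕ) → (Fin (t + 1) → ℤ) :=
    fun (m : Fin (t + 1) → ℕ) (k : Fin (t + 1)) => ((m k : ℤ)) with hcastF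
  set S : Set (Fin (t + 1) → ℤ) := castF ''
      {m : Fin (t + 1) → ℕ | (∑ k, m k • a k = 0) ∧ ∑ k, m k ≤ d} with hS
  set castF' : (Fin t → ℕ) → (Fin t → ℤ) :=
    fun (m : Fin t → ℕ) (k : Fin t) => ((m k : ℤ)) with hcastF'
  set S' : Set (Fin t → ℤ) := castF' ''
      {m : Fin t → ℕ | (∑ l, m l • (a ∘ j.succAbove) l = 0) ∧ ∑ l, m l ≤ d} with hS'
  -- the vectors v and w
  have hsv : ∑ k, (Pi.single i 1 + Pi.single j (n - 1) : Fin (t + 1) → ℕ) k • a k = 0 := by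
    simp only [Pi.add_apply, add_smul, Finset.sum_add_distrib, sum_single_smul]
    rw [haij, ← add_nsmul]
    have : 1 + (n - 1) = n := by omega
    rw [this, hn, addOrderOf_nsmul_eq_zero]
  have hlv : ∑ k, (Pi.single i 1 + Pi.single j (n - 1) : Fin (t + 1) → ℕ) k ≤ d := by
    simp only [Pi.add_apply, Finset.sum_add_distrib, Finset.sum_pi_single',
      Finset.mem_univ, if_true]
    omega
  have hsw : ∑ k, (Pi.single j n : Fin (t + 1) → ℕ) k • a k = 0 := by
    rw [sum_single_smul, hn, addOrderOf_nsmul_eq_zero]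
  have hlw : ∑ k, (Pi.single j n : Fin (t + 1) → ℕ) k ≤ d := by
    rw [Finset.sum_pi_single']
    simpa using hnd
  have hvS : castF (Pi.single i 1 + Pi.single j (n - 1)) ∈ S := ⟨_, ⟨hsv, hlv⟩, rfl⟩
  have hwS : castF (Pi.single j n) ∈ S := ⟨_, ⟨hsw, hlw⟩, rfl⟩
  have hediff : (Pi.single j (1 : ℤ) - Pi.single i 1) ∈ AddSubgroup.closure S := by
    have heq : castF (Pi.single j n) - castF (Pi.single i 1 + Pi.single j (n - 1))
        = Pi.single j (1 : ℤ) - Pi.single i 1 := by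
      funext k
      simp only [hcastF, Pi.sub_apply, Pi.add_apply, Pi.single_apply]
      split_ifs <;> omega
    rw [← heq]
    exact sub_mem (AddSubgroup.subset_closure hwS) (AddSubgroup.subset_closure hvS)
  -- the extension homomorphism
  set Ehom : (Fin t → ℤ) →+ (Fin (t + 1) → ℤ) :=
    { toFun := fun u => j.insertNth 0 u
      map_zero' := by
        funext k
        refine Fin.succAboveCases j ?_ (fun l => ?_) k <;>
          simp [Fin.insertNth_apply_same, Fin.insertNth_apply_succAbove]
      map_add' := fun u v => by
        funext k
        refine Fin.succAboveCases j ?_ (fun l => ?_) k <;>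
          simp [Fin.insertNth_apply_same, Fin.insertNth_apply_succAbove] } with hEhom
  have hES : Ehom '' S' ⊆ S := by
    rintro _ ⟨_, ⟨u, ⟨hu0, hud⟩, rfl⟩, rfl⟩
    refine ⟨j.insertNth 0 u, ⟨?_, ?_⟩, ?_⟩
    · rw [Fin.sum_univ_succAbove _ j]
      simp only [Fin.insertNth_apply_same, Fin.insertNth_apply_succAbove, zero_smul, zero_add]
      exact hu0
    · rw [Fin.sum_univ_succAbove _ j]
      simp only [Fin.insertNth_apply_same, Fin.insertNth_apply_succAbove, zero_add]
      exact hud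
    · funext k
      refine Fin.succAboveCases j ?_ (fun l => ?_) k <;>
        simp [hcastF, hcastF', hEhom, Fin.insertNth_apply_same, Fin.insertNth_apply_succAbove]
  -- now prove the set equality
  rw [ZeroSumGeneratedBy]
  show (↑(AddSubgroup.closure S) : Set (Fin (t + 1) → ℤ)) = {m : Fin (t + 1) → ℤ | ∑ k, m k • a k = 0}
  apply Set.eq_of_subset_of_subset
  · -- easy inclusion: closure ⊆ kernel
    intro m hm
    have : AddSubgroup.closure S ≤ (sumSmulHom a).ker := by
      rw [AddSubgroup.closure_le]
      rintro _ ⟨u, ⟨hu0, _⟩, rfl⟩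
      simp only [AddMonoidHom.mem_ker, sumSmulHom, AddMonoidHom.coe_mk, ZeroHom.coe_mk, hcastF]
      simpa [natCast_zsmul] using hu0
    have := this hm
    simpa [sumSmulHom, AddMonoidHom.mem_ker] using this
  · intro m hm
    simp only [Set.mem_setOf_eq] at hm
    -- merged vector
    set phim : Fin t → ℤ := (fun l => m (j.succAbove l)) + (m j) • Pi.single i' 1 with hphim
    have hphi0 : ∑ l, phim l • (a ∘ j.succAbove) l = 0 := by
      have hsum := Fin.sum_univ_succAbove (fun k => m k • a k) j
      rw [hm] at hsum
      simp only [hphim, Pi.add_apply, Pi.smul_apply, smul_eq_mul, add_smul,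
        Finset.sum_add_distrib, Function.comp_apply]
      have h2 : ∑ l, ((m j * (Pi.single i' 1 : Fin t → ℤ) l) • a (j.succAbove l))
          = m j • a (j.succAbove i') := by
        rw [Finset.sum_eq_single i']
        · simp
        · intro b _ hb
          simp [Pi.single_eq_of_ne hb]
        · intro h; exact absurd (Finset.mem_univ i') h
      rw [h2, ← hidef, haij, add_comm]
      exact hsum.symm
    have hphimem : phim ∈ AddSubgroup.closure S' := by
      have := hprev
      rw [ZeroSumGeneratedBy] at this
      have : phim ∈ (↑(AddSubgroup.closure S') : Set (Fin t → ℤ)) := by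
        rw [hS', this]
        exact hphi0
      exact this
    have hEmem : Ehom phim ∈ AddSubgroup.closure S := by
      have h1 : Ehom phim ∈ (AddSubgroup.closure S').map Ehom :=
        AddSubgroup.mem_map_of_mem Ehom hphimem
      rw [AddMonoidHom.map_closure] at h1
      exact AddSubgroup.closure_mono hES h1
    have hmeq : m = Ehom phim + (m j) • (Pi.single j (1 : ℤ) - Pi.single i 1) := by
      funext k
      refine Fin.succAboveCases j ?_ (fun l => ?_) k
      · simp [hEhom, Fin.insertNth_apply_same, Pi.single_eq_same,
          Pi.single_eq_of_ne (Ne.symm hij)]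
      · have h1 : (Pi.single j (1 : ℤ) : Fin (t + 1) → ℤ) (j.succAbove l) = 0 :=
          Pi.single_eq_of_ne (Fin.succAbove_ne j l) 1
        have h2 : (Pi.single i (1 : ℤ) : Fin (t + 1) → ℤ) (j.succAbove l)
            = (Pi.single i' (1 : ℤ) : Fin t → ℤ) l := by
          rw [hidef]
          simp only [Pi.single_apply]
          simp [Fin.succAbove_right_inj]
        simp only [Pi.add_apply, Pi.smul_apply, Pi.sub_apply, h1, h2, hEhom,
          AddMonoidHom.coe_mk, ZeroHom.coe_mk, Fin.insertNth_apply_succAbove, hphim,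
          Pi.add_apply, Pi.smul_apply, smul_eq_mul]
        ring
    rw [hmeq]
    exact AddSubgroup.add_mem _ hEmem (AddSubgroup.zsmul_mem _ hediff _)

/-- If for every `1 ≤ s ≤ N` and every sequence of `s` pairwise distinct elements of the
finite abelian group `G` the group `𝓖(a_1,…,a_s)` is generated by
`{m ∈ 𝓑(a_1,…,a_s) : |m| ≤ d}`, then the same holds for arbitrary (not necessarily
distinct) sequences of length at most `N`. -/
theorem zeroSumGenerated_of_distinct
    {G : Type*} [AddCommGroup G] [Fintype G] (N : ℕ) (hN : 1 ≤ N) (d : ℕ) (hd : 0 < d)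
    (hdist : ∀ s : ℕ, 0 < s → s ≤ N → ∀ a : Fin s → G, Function.Injective a →
      ZeroSumGeneratedBy a d) :
    ∀ s : ℕ, 0 < s → s ≤ N → ∀ a : Fin s → G, ZeroSumGeneratedBy a d := by
  have hord : ∀ g : G, addOrderOf g ≤ d := by
    intro g
    exact ord_le g (hdist 1 one_pos hN (fun _ => g)
      (Function.injective_of_subsingleton _))
  intro s
  induction s with
  | zero => intro h; omega
  | succ t ih =>
    intro _ hsN a
    by_cases hinj : Function.Injective a
    · exact hdist _ (Nat.succ_pos t) hsN a hinj
    · -- find a repeated element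
      rw [Function.not_injective_iff] at hinj
      obtain ⟨i, j, haij, hij⟩ := hinj
      have ht : 0 < t := by
        rcases Nat.eq_zero_or_pos t with h0 | h0
        · subst h0
          exfalso
          apply hij
          have h1 := i.is_lt
          have h2 := j.is_lt
          apply Fin.ext
          omega
        · exact h0
      exact step a i j hij haij (addOrderOf_pos _) (hord _)
        (ih ht (by omega) (a ∘ j.succAbove))
end

section
/- Let r ≥ 1 and let n_1,…,n_r and m_1,…,m_r be positive integers such that m_i divides n_i for i = 1,…,r and n_{i+1} divides m_i for i = 1,…,r−1. Then Σ_{i=1}^r (n_i − 1) ≥ Σ_{i=1}^r (m_i − 1) + Π_{i=1}^r (n_i/m_i) − 1. Moreover, equality holds if and only if there exists j ∈ {0,1,…,r} such that m_i = n_i for 1 ≤ i ≤ j and m_i = n_{i+1} for j < i ≤ r, where by convention n_{r+1} = 1. -/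
open Finset

private lemma down_ind (r : ℕ) (P : ℕ → Prop)
    (h : ∀ i, i < r → (∀ k, i < k → k < r → P k) → P i) : ∀ i, i < r → P i := by
  have H : ∀ d i, i < r → r - i ≤ d → P i := by
    intro d
    induction d with
    | zero => intro i hi h0; exact absurd h0 (by omega)
    | succ d ih =>
      intro i hi _
      exact h i hi fun k hik hkr => ih k hkr (by omega)
  exact fun i hi => H (r - i) i hi le_rfl

private lemma tele (D : ℕ → ℕ) (hD : ∀ i, 1 ≤ D i) (r : ℕ) :
    ∑ i ∈ range r, (∏ k ∈ Finset.Ico (i + 1) r, D k) * (D i - 1)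
      = (∏ k ∈ range r, D k) - 1 := by
  induction r with
  | zero => simp
  | succ r ih =>
    rw [Finset.sum_range_succ, Finset.prod_range_succ]
    have h1 : ∀ i ∈ range r, (∏ k ∈ Finset.Ico (i + 1) (r + 1), D k) * (D i - 1)
        = ((∏ k ∈ Finset.Ico (i + 1) r, D k) * (D i - 1)) * D r := by
      intro i hi
      rw [Finset.prod_Ico_succ_top (by simp at hi; omega : i + 1 ≤ r)]
      ring
    rw [Finset.sum_congr rfl h1, ← Finset.sum_mul, ih, Finset.Ico_self, Finset.prod_empty,
      one_mul]
    have hP : 1 ≤ ∏ k ∈ range r, D k := Finset.one_le_prod' fun i _ => hD i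
    have hDr : 1 ≤ D r := hD r
    obtain ⟨a, ha⟩ := Nat.exists_eq_add_of_le hP
    obtain ⟨b, hb⟩ := Nat.exists_eq_add_of_le hDr
    rw [ha, hb]
    have key : (1 + a) * (1 + b) = (a * (1 + b) + b) + 1 := by ring
    rw [key, Nat.add_sub_cancel, Nat.add_sub_cancel_left, Nat.add_sub_cancel_left]

private lemma aux_main (r : ℕ) (N M : ℕ → ℕ)
    (hN : ∀ i, 0 < N i) (hM : ∀ i, 0 < M i)
    (h1 : ∀ i, M i ∣ N i)
    (h2 : ∀ i, i + 1 < r → N (i + 1) ∣ M i) :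
    ((∑ i ∈ range r, (M i - 1)) + (∏ i ∈ range r, N i / M i) - 1
        ≤ ∑ i ∈ range r, (N i - 1)) ∧
    ((∑ i ∈ range r, (N i - 1))
        = (∑ i ∈ range r, (M i - 1)) + (∏ i ∈ range r, N i / M i) - 1 ↔
      ∃ j ≤ r, (∀ i, i < j → i < r → M i = N i) ∧
        ∀ i, j ≤ i → i < r → M i = if i + 1 < r then N (i + 1) else 1) := by
  classical
  set D : ℕ → ℕ := fun i => N i / M i with hDdef
  set T : ℕ → ℕ := fun i => ∏ k ∈ Finset.Ico i r, D k with hTdef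
  have hND : ∀ i, N i = M i * D i := fun i => (Nat.mul_div_cancel' (h1 i)).symm
  have hD1 : ∀ i, 1 ≤ D i := fun i =>
    (Nat.one_le_div_iff (hM i)).mpr (Nat.le_of_dvd (hN i) (h1 i))
  have hTr : T r = 1 := by simp [hTdef]
  have hTsucc : ∀ i, i < r → T i = D i * T (i + 1) := fun i hi => by
    simp only [hTdef]
    rw [Finset.prod_eq_prod_Ico_succ_bot hi]
  have hT1 : ∀ i, 1 ≤ T i := fun i => Finset.one_le_prod' fun k _ => hD1 k
  -- chain bound: m_i ≥ T_{i+1}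
  have hMT : ∀ i, i < r → T (i + 1) ≤ M i := by
    apply down_ind
    intro i hi IH
    by_cases hir : i + 1 < r
    · calc T (i + 1) = D (i + 1) * T (i + 2) := hTsucc _ hir
        _ ≤ D (i + 1) * M (i + 1) := Nat.mul_le_mul_left _ (IH (i + 1) (by omega) hir)
        _ = N (i + 1) := by rw [hND (i + 1), mul_comm]
        _ ≤ M i := Nat.le_of_dvd (hM i) (h2 i hir)
    · have hh : i + 1 = r := by omega
      rw [hh, hTr]; exact hM i
  have hT0 : T 0 = ∏ k ∈ range r, D k := by
    rw [Finset.range_eq_Ico]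
  have tel : ∑ i ∈ range r, T (i + 1) * (D i - 1) = T 0 - 1 := by
    rw [hT0]; exact tele D hD1 r
  have hterm : ∀ i ∈ range r, T (i + 1) * (D i - 1) ≤ M i * (D i - 1) :=
    fun i hi => Nat.mul_le_mul_right _ (hMT i (Finset.mem_range.mp hi))
  have hBge : T 0 - 1 ≤ ∑ i ∈ range r, M i * (D i - 1) := by
    rw [← tel]
    exact Finset.sum_le_sum hterm
  have hEq : (∑ i ∈ range r, M i * (D i - 1) = T 0 - 1) ↔
      ∀ i, i < r → D i = 1 ∨ M i = T (i + 1) := by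
    rw [← tel, eq_comm, Finset.sum_eq_sum_iff_of_le hterm]
    constructor
    · intro h i hir
      rcases Nat.eq_or_lt_of_le (hD1 i) with h' | h'
      · exact Or.inl h'.symm
      · refine Or.inr ?_
        have hh := h i (Finset.mem_range.mpr hir)
        exact (Nat.eq_of_mul_eq_mul_right (by omega) hh).symm
    · intro h i hi
      rcases h i (Finset.mem_range.mp hi) with h' | h'
      · rw [h']; simp
      · rw [h']
  -- sum bookkeeping
  have hsumN : ∑ i ∈ range r, (N i - 1) + r = ∑ i ∈ range r, N i := by
    rw [Finset.sum_congr rfl (fun i (_ : i ∈ range r) =>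
      (show N i = (N i - 1) + 1 by have := hN i; omega))]
    rw [Finset.sum_add_distrib, Finset.sum_const, Finset.card_range, smul_eq_mul, mul_one]
  have hsumM : ∑ i ∈ range r, (M i - 1) + r = ∑ i ∈ range r, M i := by
    rw [Finset.sum_congr rfl (fun i (_ : i ∈ range r) =>
      (show M i = (M i - 1) + 1 by have := hM i; omega))]
    rw [Finset.sum_add_distrib, Finset.sum_const, Finset.card_range, smul_eq_mul, mul_one]
  have hsplit : ∑ i ∈ range r, N i
      = ∑ i ∈ range r, M i + ∑ i ∈ range r, M i * (D i - 1) := by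
    rw [← Finset.sum_add_distrib]
    refine Finset.sum_congr rfl fun i _ => ?_
    have h' := hD1 i
    obtain ⟨c, hc⟩ : ∃ c, D i = 1 + c := ⟨D i - 1, by omega⟩
    rw [hND i, hc]
    have : 1 + c - 1 = c := by omega
    rw [this]; ring
  have hprod : ∏ i ∈ range r, N i / M i = T 0 := hT0.symm
  have hP1 : 1 ≤ T 0 := hT1 0
  constructor
  · rw [hprod]; omega
  · rw [hprod]
    have key : (∑ i ∈ range r, (N i - 1)
        = ∑ i ∈ range r, (M i - 1) + T 0 - 1) ↔
        (∑ i ∈ range r, M i * (D i - 1) = T 0 - 1) := by omega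
    rw [key, hEq]
    constructor
    · intro h
      by_cases hall : ∀ i, i < r → M i = N i
      · exact ⟨r, le_rfl, fun i _ hir => hall i hir,
          fun i hri hir => absurd hri (by omega)⟩
      · push_neg at hall
        have hex : ∃ j, j < r ∧ M j ≠ N j := hall
        set j := Nat.find hex with hj
        obtain ⟨hjr, hjne⟩ := Nat.find_spec hex
        have hmin : ∀ i, i < j → ¬(i < r ∧ M i ≠ N i) := fun i hij => Nat.find_min hex hij
        have hMjT : M j = T (j + 1) := by
          rcases h j hjr with h' | h'
          · exact absurd (by rw [hND j, h', mul_one]) hjne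
          · exact h'
        have forced : ∀ i, j ≤ i → i < r → M i = T (i + 1) := by
          intro i hji
          induction i, hji using Nat.le_induction with
          | base => intro _; exact hMjT
          | succ i hji ih =>
            intro hir
            have hir' : i < r := by omega
            have hi1 : i + 1 < r := hir
            have hMi : M i = T (i + 1) := ih hir'
            have hle1 : N (i + 1) ≤ M i := Nat.le_of_dvd (hM i) (h2 i hi1)
            have hTeq : T (i + 1) = D (i + 1) * T (i + 2) := hTsucc _ hi1
            have hle2 : T (i + 2) ≤ M (i + 1) := hMT (i + 1) hi1
            have hmle : D (i + 1) * T (i + 2) ≤ D (i + 1) * M (i + 1) :=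
              Nat.mul_le_mul_left _ hle2
            have hNe : N (i + 1) = D (i + 1) * M (i + 1) := by rw [hND (i + 1), mul_comm]
            have heq : D (i + 1) * T (i + 2) = D (i + 1) * M (i + 1) := by omega
            have hDpos : 0 < D (i + 1) := hD1 (i + 1)
            exact (Nat.eq_of_mul_eq_mul_left hDpos heq).symm
        refine ⟨j, by omega, ?_, ?_⟩
        · intro i hij hir
          have hh := hmin i hij
          push_neg at hh
          exact hh hir
        · intro i hji hir
          by_cases h' : i + 1 < r
          · rw [if_pos h']
            have f1 := forced i hji hir
            have f2 := forced (i + 1) (by omega) h'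
            rw [f1, hTsucc _ h', ← f2, hND (i + 1)]
            exact mul_comm _ _
          · rw [if_neg h']
            have hh := forced i hji hir
            rwa [show i + 1 = r by omega, hTr] at hh
    · rintro ⟨j, hjr, hpre, hsuf⟩ i hir
      by_cases hij : i < j
      · left
        have hMN := hpre i hij hir
        show N i / M i = 1
        rw [hMN, Nat.div_self (hN i)]
      · right
        have suf : ∀ i, i < r → j ≤ i → M i = T (i + 1) := by
          apply down_ind
          intro i hir' IH hji
          have hs := hsuf i hji hir'
          by_cases h' : i + 1 < r
          · rw [if_pos h'] at hs
            have hh := IH (i + 1) (by omega) h' (by omega)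
            rw [hs, hND (i + 1), hh, hTsucc _ h']
            exact mul_comm _ _
          · rw [if_neg h'] at hs
            rw [hs, show i + 1 = r by omega, hTr]
        exact suf i hir (by omega)

/-- Let `n_1,…,n_r` and `m_1,…,m_r` be positive integers with `m_i ∣ n_i` and
`n_{i+1} ∣ m_i`.  Then `Σ (n_i - 1) ≥ Σ (m_i - 1) + Π (n_i / m_i) - 1`, with equality
if and only if there is `j ∈ {0,…,r}` with `m_i = n_i` for `i ≤ j` and `m_i = n_{i+1}`
for `i > j` (with the convention `n_{r+1} = 1`).  Indices here are 0-based: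
`n ⟨0⟩` is `n_1`. -/
theorem dstar_inequality (r : ℕ) (hr : 1 ≤ r) (n m : Fin r → ℕ)
    (hn : ∀ i, 0 < n i) (hm : ∀ i, 0 < m i)
    (hdvd₁ : ∀ i, m i ∣ n i)
    (hdvd₂ : ∀ (i : Fin r) (h : (i : ℕ) + 1 < r), n ⟨(i : ℕ) + 1, h⟩ ∣ m i) :
    ((∑ i, (m i - 1)) + (∏ i, n i / m i) - 1 ≤ ∑ i, (n i - 1)) ∧
    ((∑ i, (n i - 1)) = (∑ i, (m i - 1)) + (∏ i, n i / m i) - 1 ↔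
      ∃ j ≤ r, (∀ i : Fin r, (i : ℕ) < j → m i = n i) ∧
        (∀ i : Fin r, j ≤ (i : ℕ) →
          m i = if h : (i : ℕ) + 1 < r then n ⟨(i : ℕ) + 1, h⟩ else 1)) := by
  classical
  set N : ℕ → ℕ := fun i => if h : i < r then n ⟨i, h⟩ else 1 with hNdef
  set M : ℕ → ℕ := fun i => if h : i < r then m ⟨i, h⟩ else 1 with hMdef
  have hNe : ∀ (i : ℕ) (h : i < r), N i = n ⟨i, h⟩ := fun i h => dif_pos h
  have hMe : ∀ (i : ℕ) (h : i < r), M i = m ⟨i, h⟩ := fun i h => dif_pos h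
  have hNe' : ∀ i : Fin r, N i = n i := fun i => hNe i i.isLt
  have hMe' : ∀ i : Fin r, M i = m i := fun i => hMe i i.isLt
  have hN' : ∀ i, 0 < N i := by
    intro i
    by_cases h : i < r
    · rw [hNe i h]; exact hn _
    · rw [show N i = 1 from dif_neg h]; exact one_pos
  have hM' : ∀ i, 0 < M i := by
    intro i
    by_cases h : i < r
    · rw [hMe i h]; exact hm _
    · rw [show M i = 1 from dif_neg h]; exact one_pos
  have h1 : ∀ i, M i ∣ N i := by
    intro i
    by_cases h : i < r
    · rw [hNe i h, hMe i h]; exact hdvd₁ _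
    · rw [show N i = 1 from dif_neg h, show M i = 1 from dif_neg h]
  have h2 : ∀ i, i + 1 < r → N (i + 1) ∣ M i := by
    intro i h'
    have h : i < r := by omega
    rw [hNe (i + 1) h', hMe i h]
    exact hdvd₂ ⟨i, h⟩ h'
  obtain ⟨ineq, eqiff⟩ := aux_main r N M hN' hM' h1 h2
  have cN : ∑ i : Fin r, (n i - 1) = ∑ i ∈ Finset.range r, (N i - 1) := by
    rw [← Fin.sum_univ_eq_sum_range (fun i => N i - 1) r]
    exact Finset.sum_congr rfl fun i _ => by rw [hNe' i]
  have cM : ∑ i : Fin r, (m i - 1) = ∑ i ∈ Finset.range r, (M i - 1) := by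
    rw [← Fin.sum_univ_eq_sum_range (fun i => M i - 1) r]
    exact Finset.sum_congr rfl fun i _ => by rw [hMe' i]
  have cP : ∏ i : Fin r, n i / m i = ∏ i ∈ Finset.range r, N i / M i := by
    rw [← Fin.prod_univ_eq_prod_range (fun i => N i / M i) r]
    exact Finset.prod_congr rfl fun i _ => by rw [hNe' i, hMe' i]
  constructor
  · rw [cN, cM, cP]; exact ineq
  · rw [cN, cM, cP, eqiff]
    constructor
    · rintro ⟨j, hjr, hpre, hsuf⟩
      refine ⟨j, hjr, ?_, ?_⟩
      · intro i hij
        have hh := hpre i hij i.isLt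
        rwa [hNe' i, hMe' i] at hh
      · intro i hji
        have hh := hsuf i hji i.isLt
        rw [hMe' i] at hh
        rw [hh]
        by_cases h' : (i : ℕ) + 1 < r
        · rw [if_pos h', dif_pos h']
          exact hNe _ h'
        · rw [if_neg h', dif_neg h']
    · rintro ⟨j, hjr, hpre, hsuf⟩
      refine ⟨j, hjr, ?_, ?_⟩
      · intro i hij hir
        rw [hNe i hir, hMe i hir]
        exact hpre ⟨i, hir⟩ hij
      · intro i hji hir
        have hh := hsuf ⟨i, hir⟩ hji
        rw [hMe i hir]
        rw [hh]
        by_cases h' : i + 1 < r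
        · rw [if_pos h', dif_pos h', hNe _ h']
        · rw [if_neg h', dif_neg h']
end

section
/- Let G be a finite abelian group of rank r with invariant factors n_1,…,n_r, and let H be a proper subgroup of G such that the factor group G/H is cyclic. Then d*(G) ≥ d*(H) + [G:H] − 1. Moreover, equality holds only if the rank of H equals r − 1 and H is isomorphic to the direct sum ⊕_{i ∈ {1,…,r}\{j}} C_{n_i} for some j ∈ {1,…,r}. -/
open Finset

section AuxiliaryLemmas


section Aux

variable {G : Type*} [AddCommGroup G]

/-- multiplication by `k` as an `AddMonoidHom`. -/
def smulHom (G : Type*) [AddCommGroup G] (k : ℕ) : G →+ G where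
  toFun := (k • ·)
  map_zero' := smul_zero k
  map_add' := fun a b => smul_add k a b

@[simp] lemma smulHom_apply (k : ℕ) (x : G) : smulHom G k x = k • x := rfl

lemma card_ker_mul_card_range [Finite G] {M : Type*} [AddCommGroup M] (f : G →+ M) :
    Nat.card f.ker * Nat.card f.range = Nat.card G := by
  rw [AddSubgroup.card_eq_card_quotient_mul_card_addSubgroup f.ker,
    Nat.card_congr (QuotientAddGroup.quotientKerEquivRange f).toEquiv, Nat.mul_comm]

lemma card_zmod_smul_ker (k n : ℕ) (hn : n ≠ 0) :
    Nat.card {x : ZMod n // k • x = 0} = Nat.gcd k n := by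
  haveI : NeZero n := ⟨hn⟩
  haveI : Finite (ZMod n) := by
    haveI : Fact (0 < n) := ⟨Nat.pos_of_ne_zero hn⟩
    infer_instance
  set f := smulHom (ZMod n) k with hf
  have h1 : Nat.card f.ker * Nat.card f.range = n := by
    rw [card_ker_mul_card_range f, Nat.card_zmod]
  have hrange : f.range = AddSubgroup.zmultiples (k : ZMod n) := by
    ext x
    constructor
    · rintro ⟨y, rfl⟩
      simp only [smulHom_apply, f]
      exact ⟨(y.val : ℤ), by push_cast [nsmul_eq_mul, zsmul_eq_mul]; ring_nf; rw [ZMod.natCast_val, ZMod.cast_id]; ring⟩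
    · rintro ⟨t, rfl⟩
      refine ⟨(t : ZMod n) • 1, ?_⟩
      simp only [smulHom_apply, f, smul_eq_mul, mul_one]
      rw [nsmul_eq_mul, zsmul_eq_mul]
      ring
  have h2 : Nat.card f.range = n / Nat.gcd n k := by
    rw [hrange, Nat.card_zmultiples, ZMod.addOrderOf_coe k hn]
  have hker : Nat.card {x : ZMod n // k • x = 0} = Nat.card f.ker := by
    apply Nat.card_congr (Equiv.subtypeEquivRight _)
    intro x
    simp [AddMonoidHom.mem_ker, f]
  rw [hker]
  rw [h2] at h1
  have hg : Nat.gcd n k ∣ n := Nat.gcd_dvd_left n k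
  have hgpos : 0 < Nat.gcd n k := Nat.gcd_pos_of_pos_left k (Nat.pos_of_ne_zero hn)
  have hdiv : 0 < n / Nat.gcd n k := Nat.div_pos (Nat.le_of_dvd (Nat.pos_of_ne_zero hn) hg) hgpos
  have : Nat.gcd n k * (n / Nat.gcd n k) = n := Nat.mul_div_cancel' hg
  rw [Nat.gcd_comm]
  exact Nat.eq_of_mul_eq_mul_right hdiv (by omega)

end Aux


lemma card_pi_smul {r : ℕ} (n : Fin r → ℕ) (hn : ∀ i, n i ≠ 0) (k : ℕ) :
    Nat.card {x : (∀ i, ZMod (n i)) // k • x = 0} = ∏ i, Nat.gcd k (n i) := by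
  have e1 : {x : (∀ i, ZMod (n i)) // k • x = 0} ≃ ∀ i, {y : ZMod (n i) // k • y = 0} := by
    refine (Equiv.subtypeEquivRight ?_).trans (Equiv.subtypePiEquivPi (p := fun i y => k • y = 0))
    intro x
    simp [funext_iff]
  rw [Nat.card_congr e1, Nat.card_pi]
  exact Finset.prod_congr rfl (fun i _ => card_zmod_smul_ker k (n i) (hn i))

lemma gcd_prime_pow {p : ℕ} (hp : p.Prime) (t n : ℕ) (hn : n ≠ 0) :
    Nat.gcd (p ^ t) n = p ^ min t (n.factorization p) := by
  obtain ⟨s, hst, hs⟩ := (Nat.dvd_prime_pow hp).1 (Nat.gcd_dvd_left (p ^ t) n)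
  rw [hs]
  congr 1
  have h1 : (Nat.gcd (p ^ t) n).factorization p = min t (n.factorization p) := by
    rw [Nat.factorization_gcd (pow_ne_zero t hp.pos.ne') hn]
    simp [hp.factorization_pow]
  rw [hs] at h1
  rw [← h1]
  simp [hp.factorization_pow]

variable {G : Type*} [AddCommGroup G]

-- cyclic torsion bound
lemma cyclic_torsion_le {Q : Type*} [AddCommGroup Q] [Finite Q] (hcyc : IsAddCyclic Q)
    (p : ℕ) (hp : 0 < p) : Nat.card {z : Q // p • z = 0} ≤ p := by
  classical
  haveI : Fintype Q := Fintype.ofFinite Q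
  have := IsAddCyclic.card_nsmul_eq_zero_le (α := Q) (n := p) hp
  calc Nat.card {z : Q // p • z = 0} = Fintype.card {z : Q // p • z = 0} := Nat.card_eq_fintype_card
    _ ≤ p := by convert this using 1; simp [Fintype.card_subtype]

section CORE
variable [Fintype G] (H : AddSubgroup G)

/-- claims 1 and 2 together -/
lemma core_claims (hcyc : IsAddCyclic (G ⧸ H)) {p q : ℕ} (hp : 0 < p) :
    (Nat.card {x : H // (p * q) • (x : G) = 0} * Nat.card {x : G // q • x = 0} ≤
      Nat.card {x : G // (p * q) • x = 0} * Nat.card {x : H // q • (x : G) = 0}) ∧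
    (Nat.card {x : G // (p * q) • x = 0} * Nat.card {x : H // q • (x : G) = 0} ≤
      p * (Nat.card {x : H // (p * q) • (x : G) = 0} * Nat.card {x : G // q • x = 0})) := by
  classical
  set s := p * q with hs
  set π := QuotientAddGroup.mk' H with hπ
  set S := (smulHom G s).ker with hS
  set K := (smulHom G q).ker with hK
  have hKS : K ≤ S := by
    intro x hx
    have hx' : q • x = 0 := hx
    show s • x = 0
    rw [hs, mul_smul, hx', smul_zero]
  set fS := π.comp S.subtype with hfS
  set fK := π.comp K.subtype with hfK
  -- kernels are H-torsion
  have eS : fS.ker ≃ {x : H // s • (x : G) = 0} := by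
    refine ⟨fun x => ⟨⟨x.1.1, ?_⟩, x.1.2⟩, fun y => ⟨⟨y.1.1, y.2⟩, ?_⟩, fun x => rfl, fun y => rfl⟩
    · have := x.2
      simpa only [AddMonoidHom.mem_ker, hfS, AddMonoidHom.comp_apply, hπ,
        QuotientAddGroup.mk'_apply, QuotientAddGroup.eq_zero_iff, AddSubgroup.coe_subtype] using this
    · simp only [AddMonoidHom.mem_ker, hfS, AddMonoidHom.comp_apply, hπ,
        QuotientAddGroup.mk'_apply, QuotientAddGroup.eq_zero_iff]
      exact y.1.2
  have eK : fK.ker ≃ {x : H // q • (x : G) = 0} := by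
    refine ⟨fun x => ⟨⟨x.1.1, ?_⟩, x.1.2⟩, fun y => ⟨⟨y.1.1, y.2⟩, ?_⟩, fun x => rfl, fun y => rfl⟩
    · have := x.2
      simpa only [AddMonoidHom.mem_ker, hfK, AddMonoidHom.comp_apply, hπ,
        QuotientAddGroup.mk'_apply, QuotientAddGroup.eq_zero_iff, AddSubgroup.coe_subtype] using this
    · simp only [AddMonoidHom.mem_ker, hfK, AddMonoidHom.comp_apply, hπ,
        QuotientAddGroup.mk'_apply, QuotientAddGroup.eq_zero_iff]
      exact y.1.2
  have cardS : Nat.card {x : G // s • x = 0} =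
      Nat.card {x : H // s • (x : G) = 0} * Nat.card fS.range := by
    rw [← Nat.card_congr eS, card_ker_mul_card_range fS]
    exact (Nat.card_congr (Equiv.subtypeEquivRight (fun x => by
      simp [hS, AddMonoidHom.mem_ker]))).symm
  have cardK : Nat.card {x : G // q • x = 0} =
      Nat.card {x : H // q • (x : G) = 0} * Nat.card fK.range := by
    rw [← Nat.card_congr eK, card_ker_mul_card_range fK]
    exact (Nat.card_congr (Equiv.subtypeEquivRight (fun x => by
      simp [hK, AddMonoidHom.mem_ker]))).symm
  have hrange_le : fK.range ≤ fS.range := by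
    rintro y ⟨x, rfl⟩
    exact ⟨⟨x.1, hKS x.2⟩, rfl⟩
  haveI ne1 : Nonempty {x : H // s • (x : G) = 0} := ⟨⟨0, by simp⟩⟩
  haveI ne2 : Nonempty {x : H // q • (x : G) = 0} := ⟨⟨0, by simp⟩⟩
  constructor
  · rw [cardS, cardK]
    have h1 : Nat.card fK.range ≤ Nat.card fS.range := AddSubgroup.card_le_of_le hrange_le
    calc Nat.card {x : H // s • (x : G) = 0} * (Nat.card {x : H // q • (x : G) = 0} * Nat.card fK.range)
        = Nat.card {x : H // s • (x : G) = 0} * Nat.card {x : H // q • (x : G) = 0} * Nat.card fK.range := by ring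
      _ ≤ Nat.card {x : H // s • (x : G) = 0} * Nat.card {x : H // q • (x : G) = 0} * Nat.card fS.range :=
          Nat.mul_le_mul_left _ h1
      _ = Nat.card {x : H // s • (x : G) = 0} * Nat.card fS.range * Nat.card {x : H // q • (x : G) = 0} := by ring
  · -- claim 2 : card fS.range ≤ p * card fK.range
    set g := (smulHom (G ⧸ H) p).comp fS.range.subtype with hg
    have hgrange : g.range ≤ fK.range := by
      rintro y ⟨⟨z, ⟨x, rfl⟩⟩, rfl⟩
      refine ⟨⟨p • x.1, ?_⟩, ?_⟩
      · show q • (p • x.1) = 0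
        have hxS : s • x.1 = 0 := x.2
        rw [smul_smul, mul_comm, ← hs, hxS]
      · show π (p • (x : G)) = _
        rw [map_nsmul]
        rfl
  -- card g.ker ≤ p
    have hker_le : Nat.card g.ker ≤ p := by
      have hf : ∀ x : g.ker, p • ((x : fS.range) : G ⧸ H) = 0 := fun x => x.2
      have hinj : Function.Injective
          (fun x : g.ker => (⟨((x : fS.range) : G ⧸ H), hf x⟩ : {z : G ⧸ H // p • z = 0})) := by
        intro a b hab
        rw [Subtype.mk.injEq] at hab
        exact Subtype.ext (Subtype.ext hab)
      exact (Nat.card_le_card_of_injective _ hinj).trans (cyclic_torsion_le hcyc p hp)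
    have hS_le : Nat.card fS.range ≤ p * Nat.card fK.range := by
      have hkr := card_ker_mul_card_range g
      have h2 : Nat.card g.range ≤ Nat.card fK.range := AddSubgroup.card_le_of_le hgrange
      calc Nat.card fS.range = Nat.card g.ker * Nat.card g.range := hkr.symm
        _ ≤ p * Nat.card fK.range := Nat.mul_le_mul hker_le h2
    rw [cardS, cardK]
    calc Nat.card {x : H // s • (x : G) = 0} * Nat.card fS.range * Nat.card {x : H // q • (x : G) = 0}
        ≤ Nat.card {x : H // s • (x : G) = 0} * (p * Nat.card fK.range) * Nat.card {x : H // q • (x : G) = 0} := by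
          exact Nat.mul_le_mul (Nat.mul_le_mul_left _ hS_le) (le_refl _)
      _ = p * (Nat.card {x : H // s • (x : G) = 0} * (Nat.card {x : H // q • (x : G) = 0} * Nat.card fK.range)) := by ring

end CORE


lemma prod_pos_fin {r : ℕ} {f : Fin r → ℕ} (hf : ∀ i, 0 < f i) : 0 < ∏ i, f i :=
  Finset.prod_pos (fun i _ => hf i)

lemma eq_of_dvd_of_prod_eq : ∀ (r : ℕ) (f g : Fin r → ℕ), (∀ i, f i ∣ g i) → (∀ i, 0 < f i) →
    (∀ i, 0 < g i) → (∏ i, f i) = (∏ i, g i) → ∀ i, f i = g i := by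
  intro r
  induction r with
  | zero => intro f g _ _ _ _ i; exact absurd i.2 (by omega)
  | succ r ih =>
    intro f g hdvd hf hg hprod
    rw [Fin.prod_univ_succ, Fin.prod_univ_succ] at hprod
    have h0le : f 0 ≤ g 0 := Nat.le_of_dvd (hg 0) (hdvd 0)
    have htle : (∏ i : Fin r, f i.succ) ≤ ∏ i : Fin r, g i.succ :=
      Finset.prod_le_prod (fun i _ => Nat.zero_le _)
        (fun i _ => Nat.le_of_dvd (hg i.succ) (hdvd i.succ))
    have hfp : 0 < ∏ i : Fin r, f i.succ := prod_pos_fin (fun i => hf i.succ)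
    have hgp : 0 < ∏ i : Fin r, g i.succ := prod_pos_fin (fun i => hg i.succ)
    have h0 : f 0 = g 0 ∧ (∏ i : Fin r, f i.succ) = ∏ i : Fin r, g i.succ := by
      constructor <;> nlinarith [hf 0, hg 0]
    intro i
    rcases Fin.eq_zero_or_eq_succ i with h | ⟨j, rfl⟩
    · rw [h]; exact h0.1
    · exact ih (fun t => f t.succ) (fun t => g t.succ) (fun t => hdvd t.succ)
        (fun t => hf t.succ) (fun t => hg t.succ) h0.2 j

/-- arithmetic lemma for the equal-rank case -/
lemma arith_eq_rank : ∀ (r : ℕ) (n m : Fin r → ℕ) (k : ℕ), (∀ i, 0 < n i) → (∀ i, 2 ≤ m i) →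
    (∀ i, m i ∣ n i) → (∀ (i : Fin r) (h : i.val + 1 < r), n ⟨i.val + 1, h⟩ ∣ m i) →
    k * ∏ i, m i = ∏ i, n i →
    (k ≤ (if h : 0 < r then n ⟨0, h⟩ else 1)) ∧
    ((∑ i, (m i - 1)) + k ≤ (∑ i, (n i - 1)) + 1) ∧
    (2 ≤ k → (∑ i, (m i - 1)) + k ≤ ∑ i, (n i - 1)) := by
  intro r
  induction r with
  | zero =>
    intro n m k _ _ _ _ hprod
    simp only [Finset.univ_eq_empty, Finset.prod_empty, Finset.sum_empty, mul_one] at *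
    subst hprod
    refine ⟨by simp, by omega, by omega⟩
  | succ r ih =>
    intro n m k hn hm hdvd hchain hprod
    set n' : Fin r → ℕ := fun i => n i.succ with hn'def
    set m' : Fin r → ℕ := fun i => m i.succ with hm'def
    have hn'pos : ∀ i, 0 < n' i := fun i => hn i.succ
    have hm'2 : ∀ i, 2 ≤ m' i := fun i => hm i.succ
    have hmdvd' : ∀ i : Fin r, m' i ∣ n' i := fun i => hdvd i.succ
    have hchain' : ∀ (i : Fin r) (h : i.val + 1 < r), n' ⟨i.val + 1, h⟩ ∣ m' i := by
      intro i h
      have h2 : (i.succ : Fin (r + 1)).val + 1 < r + 1 := by simp; omega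
      have h3 := hchain i.succ h2
      have he : (⟨(i.succ : Fin (r + 1)).val + 1, h2⟩ : Fin (r + 1)) =
          ((⟨i.val + 1, h⟩ : Fin r) : Fin r).succ := by
        ext; simp
      rw [he] at h3
      exact h3
    have hprodm' : 0 < ∏ i, m' i := prod_pos_fin (fun i => by have := hm'2 i; omega)
    have hprodn' : 0 < ∏ i, n' i := prod_pos_fin hn'pos
    have hdvdprod : (∏ i, m' i) ∣ ∏ i, n' i :=
      Finset.prod_dvd_prod_of_dvd _ _ (fun i _ => hmdvd' i)
    obtain ⟨k', hk'prod⟩ : ∃ k', k' * ∏ i, m' i = ∏ i, n' i :=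
      ⟨_, Nat.div_mul_cancel hdvdprod⟩
    obtain ⟨a, haA⟩ : ∃ a, a * m 0 = n 0 := ⟨_, Nat.div_mul_cancel (hdvd 0)⟩
    have hm0 : 0 < m 0 := by have := hm 0; omega
    have hka : k = a * k' := by
      have h1 : k * (m 0 * ∏ i, m' i) = n 0 * ∏ i, n' i := by
        rw [← Fin.prod_univ_succ, ← Fin.prod_univ_succ]; exact hprod
      have h2 : k * (m 0 * ∏ i, m' i) = (a * k') * (m 0 * ∏ i, m' i) := by
        rw [h1, ← haA, ← hk'prod]; ring
      exact Nat.eq_of_mul_eq_mul_right (Nat.mul_pos hm0 hprodm') h2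
    obtain ⟨ihk, ih1, ih2⟩ := ih n' m' k' hn'pos hm'2 hmdvd' hchain' hk'prod
    have hk'le : k' ≤ m 0 := by
      rcases Nat.eq_zero_or_pos r with hr | hr
      · rw [dif_neg (by omega)] at ihk
        exact le_trans ihk (by omega)
      · rw [dif_pos hr] at ihk
        have h2 : (0 : Fin (r + 1)).val + 1 < r + 1 := by simp; omega
        have h3 := hchain 0 h2
        have he : (⟨(0 : Fin (r + 1)).val + 1, h2⟩ : Fin (r + 1)) = (⟨0, hr⟩ : Fin r).succ := by
          ext; simp
        rw [he] at h3
        exact le_trans ihk (Nat.le_of_dvd hm0 h3)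
    have ha1 : 1 ≤ a := by
      rcases Nat.eq_zero_or_pos a with h | h
      · exfalso; rw [h, zero_mul] at haA; have := hn 0; omega
      · exact h
    have hk'1 : 1 ≤ k' := by
      rcases Nat.eq_zero_or_pos k' with h | h
      · exfalso; rw [h, zero_mul] at hk'prod; omega
      · exact h
    have key1 : m 0 + a * k' ≤ a * m 0 + k' := by
      zify; nlinarith [hk'le, ha1]
    have hsum_m : (∑ i, (m i - 1)) = (m 0 - 1) + ∑ i, (m' i - 1) := by
      rw [Fin.sum_univ_succ]
    have hsum_n : (∑ i, (n i - 1)) = (n 0 - 1) + ∑ i, (n' i - 1) := by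
      rw [Fin.sum_univ_succ]
    refine ⟨?_, ?_, ?_⟩
    · rw [dif_pos (Nat.succ_pos r)]
      show k ≤ n 0
      rw [hka, ← haA]
      exact Nat.mul_le_mul_left a hk'le
    · rw [hsum_m, hsum_n, hka, ← haA]
      have hm0' := hm 0
      generalize hu : a * k' = u at *
      generalize hv : a * m 0 = v at *
      omega
    · intro hk2
      rw [hsum_m, hsum_n, hka, ← haA]
      rw [hka] at hk2
      rcases Nat.eq_or_lt_of_le ha1 with h1 | h1
      · -- a = 1
        have ha' : a = 1 := h1.symm
        subst ha'
        simp only [one_mul] at hk2 ⊢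
        have h4 := ih2 hk2
        have hm0' := hm 0
        omega
      · -- a ≥ 2
        rcases Nat.eq_or_lt_of_le hk'le with he | he
        · -- k' = m 0 ≥ 2
          have hk2' : 2 ≤ k' := by rw [he]; exact hm 0
          have h4 := ih2 hk2'
          have hm0' := hm 0
          generalize hu : a * k' = u at *
          generalize hv : a * m 0 = v at *
          omega
        · -- k' < m 0
          have key2 : m 0 + a * k' + 1 ≤ a * m 0 + k' := by
            zify; nlinarith [he, h1]
          have hm0' := hm 0
          generalize hu : a * k' = u at *
          generalize hv : a * m 0 = v at *
          omega

/-- arithmetic lemma for the rank-(r-1) case, with equality classification -/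
lemma arith_rank_pred : ∀ (r : ℕ) (n : Fin (r + 1) → ℕ) (m : Fin r → ℕ) (k : ℕ),
    (∀ i, 0 < n i) → (∀ i, 2 ≤ m i) →
    (∀ i : Fin r, m i ∣ n i.castSucc) → (∀ i : Fin r, n i.succ ∣ m i) →
    k * ∏ i, m i = ∏ i, n i →
    (k ≤ n 0) ∧
    ((∑ i, (m i - 1)) + k ≤ (∑ i, (n i - 1)) + 1) ∧
    ((∑ i, (m i - 1)) + k = (∑ i, (n i - 1)) + 1 →
      ∃ j : Fin (r + 1), ∀ i : Fin r, m i = n (j.succAbove i)) := by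
  intro r
  induction r with
  | zero =>
    intro n m k hn _ _ _ hprod
    simp only [Finset.univ_eq_empty, Finset.prod_empty, Finset.sum_empty, mul_one] at *
    rw [Fin.prod_univ_succ] at hprod
    simp only [Finset.univ_eq_empty, Finset.prod_empty, mul_one] at hprod
    subst hprod
    rw [Fin.sum_univ_succ]
    simp only [Finset.univ_eq_empty, Finset.sum_empty, add_zero]
    have := hn 0
    exact ⟨le_refl _, by omega, fun _ => ⟨0, fun i => absurd i.2 (by omega)⟩⟩
  | succ r ih =>
    intro n m k hn hm hdvd hchain hprod
    set n' : Fin (r + 1) → ℕ := fun i => n i.succ with hn'def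
    set m' : Fin r → ℕ := fun i => m i.succ with hm'def
    have hn'pos : ∀ i, 0 < n' i := fun i => hn i.succ
    have hm'2 : ∀ i, 2 ≤ m' i := fun i => hm i.succ
    have hmdvd' : ∀ i : Fin r, m' i ∣ n' i.castSucc := by
      intro i
      have h3 := hdvd i.succ
      have he : (i.succ : Fin (r + 1)).castSucc = (i.castSucc : Fin (r + 1)).succ := by
        ext; simp
      rw [he] at h3
      exact h3
    have hchain' : ∀ i : Fin r, n' i.succ ∣ m' i := fun i => hchain i.succ
    have hprodm' : 0 < ∏ i, m' i := prod_pos_fin (fun i => by have := hm'2 i; omega)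
    have hprodn' : 0 < ∏ i, n' i := prod_pos_fin hn'pos
    have hdvdprod : (∏ i, m' i) ∣ ∏ i, n' i := by
      calc (∏ i, m' i) ∣ ∏ i : Fin r, n' i.castSucc :=
            Finset.prod_dvd_prod_of_dvd _ _ (fun i _ => hmdvd' i)
        _ ∣ ∏ i, n' i := by
            rw [Fin.prod_univ_castSucc]
            exact Dvd.intro _ rfl
    obtain ⟨k', hk'prod⟩ : ∃ k', k' * ∏ i, m' i = ∏ i, n' i :=
      ⟨_, Nat.div_mul_cancel hdvdprod⟩
    have hA : m 0 ∣ n 0 := by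
      have := hdvd 0
      simpa using this
    obtain ⟨a, haA⟩ : ∃ a, a * m 0 = n 0 := ⟨_, Nat.div_mul_cancel hA⟩
    have hm0 : 0 < m 0 := by have := hm 0; omega
    have hka : k = a * k' := by
      have h1 : k * (m 0 * ∏ i, m' i) = n 0 * ∏ i, n' i := by
        rw [← Fin.prod_univ_succ, ← Fin.prod_univ_succ]; exact hprod
      have h2 : k * (m 0 * ∏ i, m' i) = (a * k') * (m 0 * ∏ i, m' i) := by
        rw [h1, ← haA, ← hk'prod]; ring
      exact Nat.eq_of_mul_eq_mul_right (Nat.mul_pos hm0 hprodm') h2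
    obtain ⟨ihk, ih1, ih2⟩ := ih n' m' k' hn'pos hm'2 hmdvd' hchain' hk'prod
    have hn1m0 : n' 0 ∣ m 0 := by
      have := hchain 0
      exact this
    have hk'le : k' ≤ m 0 := le_trans ihk (Nat.le_of_dvd hm0 hn1m0)
    have ha1 : 1 ≤ a := by
      rcases Nat.eq_zero_or_pos a with h | h
      · exfalso; rw [h, zero_mul] at haA; have := hn 0; omega
      · exact h
    have hk'1 : 1 ≤ k' := by
      rcases Nat.eq_zero_or_pos k' with h | h
      · exfalso; rw [h, zero_mul] at hk'prod; omega
      · exact h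
    have key1 : m 0 + a * k' ≤ a * m 0 + k' := by
      zify; nlinarith [hk'le, ha1]
    have hsum_m : (∑ i, (m i - 1)) = (m 0 - 1) + ∑ i, (m' i - 1) := by
      rw [Fin.sum_univ_succ]
    have hsum_n : (∑ i, (n i - 1)) = (n 0 - 1) + ∑ i, (n' i - 1) := by
      rw [Fin.sum_univ_succ]
    refine ⟨?_, ?_, ?_⟩
    · rw [hka, ← haA]
      exact Nat.mul_le_mul_left a hk'le
    · rw [hsum_m, hsum_n, hka, ← haA]
      have hm0' := hm 0
      generalize hu : a * k' = u at *
      generalize hv : a * m 0 = v at *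
      omega
    · intro heq
      rw [hsum_m, hsum_n, hka, ← haA] at heq
      -- tightness : both ih1 and key1 must be equalities
      have htight : ((∑ i, (m' i - 1)) + k' = (∑ i, (n' i - 1)) + 1) ∧
          (a = 1 ∨ k' = m 0) := by
        have hm0' := hm 0
        have hn0' := hn 0
        rw [← haA] at hn0'
        constructor
        · generalize hu : a * k' = u at *
          generalize hv : a * m 0 = v at *
          omega
        · by_contra hcon
          push_neg at hcon
          obtain ⟨ha2, hkm⟩ := hcon
          have ha2' : 2 ≤ a := by omega
          have hklt : k' < m 0 := lt_of_le_of_ne hk'le hkm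
          have key2 : m 0 + a * k' + 1 ≤ a * m 0 + k' := by
            zify; nlinarith [hklt, ha2']
          generalize hu : a * k' = u at *
          generalize hv : a * m 0 = v at *
          omega
      rcases htight.2 with ha' | hkm
      · -- a = 1 : use induction equality case
        subst ha'
        simp only [one_mul] at haA
        obtain ⟨j', hj'⟩ := ih2 htight.1
        refine ⟨j'.succ, ?_⟩
        intro i
        rcases Fin.eq_zero_or_eq_succ i with h0 | ⟨i'', rfl⟩
        · subst h0
          have hsA : j'.succ.succAbove 0 = 0 := by
            rw [Fin.succAbove_of_castSucc_lt]
            · rfl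
            · simp [Fin.lt_def]
          rw [hsA, haA]
        · have hsA : j'.succ.succAbove i''.succ = (j'.succAbove i'').succ :=
            Fin.succ_succAbove_succ j' i''
          rw [hsA]
          exact hj' i''
      · -- k' = m 0 : then m i = n i.succ for all i, j = 0
        have hk'n1 : k' = n' 0 := le_antisymm ihk (by
          rw [hkm]
          exact Nat.le_of_dvd hm0 hn1m0 |>.trans (le_refl _) |>.trans_eq rfl |>.trans_eq rfl
          )
        refine ⟨0, ?_⟩
        -- products of tails equal
        have hpr : (∏ i : Fin r, n' i.succ) = ∏ i : Fin r, m' i := by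
          have h1 : k' * ∏ i, m' i = n' 0 * ∏ i : Fin r, n' i.succ := by
            rw [hk'prod, Fin.prod_univ_succ]
          rw [hk'n1] at h1
          have hn'0 : 0 < n' 0 := hn'pos 0
          exact (Nat.eq_of_mul_eq_mul_left hn'0 h1).symm
        have hterm : ∀ i : Fin r, n' i.succ = m' i :=
          eq_of_dvd_of_prod_eq r (fun i => n' i.succ) m' hchain'
            (fun i => hn'pos i.succ) (fun i => by have := hm'2 i; omega) hpr
        intro i
        have hsA : (0 : Fin (r + 2)).succAbove i = i.succ := rfl
        rw [hsA]
        rcases Fin.eq_zero_or_eq_succ i with h0 | ⟨i'', rfl⟩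
        · subst h0
          rw [← hkm]
          exact hk'n1
        · have := hterm i''
          exact this.symm

open Finset

lemma stepB {r r' : ℕ} (n : Fin r → ℕ) (m : Fin r' → ℕ) (hn2 : ∀ i, 2 ≤ n i) (hm2 : ∀ i, 2 ≤ m i)
    (hchn : ∀ i j : Fin r, i ≤ j → n j ∣ n i) (hchm : ∀ i j : Fin r', i ≤ j → m j ∣ m i)
    (hcd : ∀ p : ℕ, p.Prime → ∀ e : ℕ,
      #{i : Fin r' | p ^ (e + 1) ∣ m i} ≤ #{i : Fin r | p ^ (e + 1) ∣ n i} ∧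
      #{i : Fin r | p ^ (e + 1) ∣ n i} ≤ #{i : Fin r' | p ^ (e + 1) ∣ m i} + 1) :
    r' ≤ r ∧ (0 < r → r ≤ r' + 1) ∧
    (∀ (i : Fin r') (h : i.val < r), m i ∣ n ⟨i.val, h⟩) ∧
    (∀ (i : Fin r') (h : i.val + 1 < r), n ⟨i.val + 1, h⟩ ∣ m i) := by
  classical
  refine ⟨?_, ?_, ?_, ?_⟩
  · -- r' ≤ r
    rcases Nat.eq_zero_or_pos r' with h0 | h0
    · omega
    · set p := (m ⟨r' - 1, by omega⟩).minFac with hp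
      have hpp : p.Prime := Nat.minFac_prime (by have := hm2 ⟨r' - 1, by omega⟩; omega)
      have hfull : ({i : Fin r' | p ^ (0 + 1) ∣ m i} : Finset (Fin r')) = univ := by
        apply Finset.eq_univ_of_forall
        intro i
        simp only [mem_filter, mem_univ, true_and, pow_one, Set.mem_setOf_eq]
        rw [pow_one]
        exact dvd_trans (Nat.minFac_dvd _) (hchm i ⟨r' - 1, by omega⟩ (by simp [Fin.le_def]; omega))
      have := (hcd p hpp 0).1
      rw [hfull, Finset.card_univ, Fintype.card_fin] at this
      exact this.trans ((Finset.card_filter_le _ _).trans (by simp))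
  · -- r ≤ r' + 1
    intro hr
    set p := (n ⟨r - 1, by omega⟩).minFac with hp
    have hpp : p.Prime := Nat.minFac_prime (by have := hn2 ⟨r - 1, by omega⟩; omega)
    have hfull : ({i : Fin r | p ^ (0 + 1) ∣ n i} : Finset (Fin r)) = univ := by
      apply Finset.eq_univ_of_forall
      intro i
      simp only [mem_filter, mem_univ, true_and, pow_one, Set.mem_setOf_eq]
      rw [pow_one]
      exact dvd_trans (Nat.minFac_dvd _) (hchn i ⟨r - 1, by omega⟩ (by simp [Fin.le_def]; omega))
    have := (hcd p hpp 0).2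
    rw [hfull, Finset.card_univ, Fintype.card_fin] at this
    have hle : #{i : Fin r' | p ^ (0 + 1) ∣ m i} ≤ r' := by
      exact (Finset.card_filter_le _ _).trans (by simp)
    omega
  · -- m i ∣ n i
    intro i h
    have hmne : m i ≠ 0 := by have := hm2 i; omega
    have hnne : n ⟨i.val, h⟩ ≠ 0 := by have := hn2 ⟨i.val, h⟩; omega
    rw [← Nat.factorization_le_iff_dvd hmne hnne]
    intro p
    by_cases hpp : p.Prime
    · by_contra hcon
      push_neg at hcon
      set α := (n ⟨i.val, h⟩).factorization p with hα
      have hβ : α + 1 ≤ (m i).factorization p := hcon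
      have hd : i.val + 1 ≤ #{j : Fin r' | p ^ (α + 1) ∣ m j} := by
        have hsub : Finset.Iic i ⊆ filter (fun j : Fin r' => p ^ (α + 1) ∣ m j) univ := by
          intro j hj
          rw [Finset.mem_Iic] at hj
          simp only [mem_filter, mem_univ, true_and, Set.mem_setOf_eq]
          calc p ^ (α + 1) ∣ p ^ ((m i).factorization p) := pow_dvd_pow p hβ
            _ ∣ m i := Nat.ordProj_dvd _ _
            _ ∣ m j := hchm j i hj
        calc i.val + 1 = #(Finset.Iic i) := (Fin.card_Iic i).symm
          _ ≤ _ := Finset.card_le_card hsub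
      have hc : #{j : Fin r | p ^ (α + 1) ∣ n j} ≤ i.val := by
        have hsub : filter (fun j : Fin r => p ^ (α + 1) ∣ n j) univ ⊆
            Finset.Iio (⟨i.val, h⟩ : Fin r) := by
          intro j hj
          simp only [mem_filter, mem_univ, true_and, Set.mem_setOf_eq] at hj
          rw [Finset.mem_Iio]
          by_contra hge
          push_neg at hge
          have : p ^ (α + 1) ∣ n ⟨i.val, h⟩ := hj.trans (hchn ⟨i.val, h⟩ j hge)
          exact Nat.pow_succ_factorization_not_dvd hnne hpp this
        calc #{j : Fin r | p ^ (α + 1) ∣ n j} ≤ #(Finset.Iio (⟨i.val, h⟩ : Fin r)) :=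
              Finset.card_le_card hsub
          _ = i.val := Fin.card_Iio _
      have := (hcd p hpp α).1
      omega
    · simp [Nat.factorization_eq_zero_of_not_prime _ hpp]
  · -- n (i+1) ∣ m i
    intro i h
    have hmne : m i ≠ 0 := by have := hm2 i; omega
    have hnne : n ⟨i.val + 1, h⟩ ≠ 0 := by have := hn2 ⟨i.val + 1, h⟩; omega
    rw [← Nat.factorization_le_iff_dvd hnne hmne]
    intro p
    by_cases hpp : p.Prime
    · by_contra hcon
      push_neg at hcon
      set β := (m i).factorization p with hβ
      have hα : β + 1 ≤ (n ⟨i.val + 1, h⟩).factorization p := hcon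
      have hc : i.val + 2 ≤ #{j : Fin r | p ^ (β + 1) ∣ n j} := by
        have hsub : Finset.Iic (⟨i.val + 1, h⟩ : Fin r) ⊆ filter (fun j : Fin r => p ^ (β + 1) ∣ n j) univ := by
          intro j hj
          rw [Finset.mem_Iic] at hj
          simp only [mem_filter, mem_univ, true_and, Set.mem_setOf_eq]
          calc p ^ (β + 1) ∣ p ^ ((n ⟨i.val + 1, h⟩).factorization p) := pow_dvd_pow p hα
            _ ∣ n ⟨i.val + 1, h⟩ := Nat.ordProj_dvd _ _
            _ ∣ n j := hchn j ⟨i.val + 1, h⟩ hj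
        calc i.val + 2 = #(Finset.Iic (⟨i.val + 1, h⟩ : Fin r)) := by rw [Fin.card_Iic]
          _ ≤ _ := Finset.card_le_card hsub
      have hd : #{j : Fin r' | p ^ (β + 1) ∣ m j} ≤ i.val := by
        have hsub : filter (fun j : Fin r' => p ^ (β + 1) ∣ m j) univ ⊆ Finset.Iio i := by
          intro j hj
          simp only [mem_filter, mem_univ, true_and, Set.mem_setOf_eq] at hj
          rw [Finset.mem_Iio]
          by_contra hge
          push_neg at hge
          have : p ^ (β + 1) ∣ m i := hj.trans (hchm i j hge)
          exact Nat.pow_succ_factorization_not_dvd hmne hpp this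
        calc #{j : Fin r' | p ^ (β + 1) ∣ m j} ≤ #(Finset.Iio i) := Finset.card_le_card hsub
          _ = i.val := Fin.card_Iio _
      have := (hcd p hpp β).2
      omega
    · simp [Nat.factorization_eq_zero_of_not_prime _ hpp]


/-- cast between `ZMod` types -/
def zmodCongr {a b : ℕ} (h : a = b) : ZMod a ≃+ ZMod b := h ▸ AddEquiv.refl (ZMod a)

/-- `Equiv.piCongrLeft'` as an `AddEquiv`. -/
def addPiCongrLeft' {ι ι' : Type*} (M : ι → Type*) [∀ i, AddZeroClass (M i)] (e : ι ≃ ι') :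
    ((i : ι) → M i) ≃+ ((i' : ι') → M (e.symm i')) :=
  { Equiv.piCongrLeft' M e with map_add' := fun _ _ => rfl }

section
variable {G : Type*} [AddCommGroup G] {r r' : ℕ}

lemma card_G_torsion (n : Fin r → ℕ) (hn : ∀ i, n i ≠ 0) (e : G ≃+ (∀ i, ZMod (n i))) (k : ℕ) :
    Nat.card {x : G // k • x = 0} = ∏ i, Nat.gcd k (n i) := by
  rw [← card_pi_smul n hn k]
  apply Nat.card_congr
  apply Equiv.subtypeEquiv e.toEquiv
  intro x
  constructor
  · intro hx
    show k • e x = 0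
    rw [← map_nsmul, hx, map_zero]
  · intro hx
    have : e (k • x) = 0 := by rw [map_nsmul]; exact hx
    exact (map_eq_zero_iff e e.injective).mp this

lemma card_H_torsion (m : Fin r' → ℕ) (hm : ∀ i, m i ≠ 0) (H : AddSubgroup G)
    (eH : H ≃+ (∀ i, ZMod (m i))) (k : ℕ) :
    Nat.card {x : H // k • (x : G) = 0} = ∏ i, Nat.gcd k (m i) := by
  have h1 : Nat.card {x : H // k • (x : G) = 0} = Nat.card {x : H // k • x = 0} := by
    apply Nat.card_congr
    apply Equiv.subtypeEquivRight
    intro x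
    rw [← AddSubmonoidClass.coe_nsmul, ZeroMemClass.coe_eq_zero]
  rw [h1]
  exact card_G_torsion m hm eH k

variable [Fintype G]

lemma counts_from_group (n : Fin r → ℕ) (m : Fin r' → ℕ)
    (hn2 : ∀ i, 2 ≤ n i) (hm2 : ∀ i, 2 ≤ m i)
    (e : G ≃+ (∀ i, ZMod (n i))) (H : AddSubgroup G) (eH : H ≃+ (∀ i, ZMod (m i)))
    (hcyc : IsAddCyclic (G ⧸ H)) (p : ℕ) (hpp : p.Prime) (t : ℕ) :
    #{i : Fin r' | p ^ (t + 1) ∣ m i} ≤ #{i : Fin r | p ^ (t + 1) ∣ n i} ∧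
    #{i : Fin r | p ^ (t + 1) ∣ n i} ≤ #{i : Fin r' | p ^ (t + 1) ∣ m i} + 1 := by
  classical
  have hnne : ∀ i, n i ≠ 0 := fun i => by have := hn2 i; omega
  have hmne : ∀ i, m i ≠ 0 := fun i => by have := hm2 i; omega
  set a : ℕ → ℕ := fun s => ∑ i, min s ((n i).factorization p) with ha
  set b : ℕ → ℕ := fun s => ∑ i, min s ((m i).factorization p) with hb
  have hNG : ∀ s, Nat.card {x : G // p ^ s • x = 0} = p ^ a s := by
    intro s
    rw [card_G_torsion n hnne e (p ^ s)]
    simp only [ha]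
    rw [← Finset.prod_pow_eq_pow_sum]
    exact Finset.prod_congr rfl (fun i _ => gcd_prime_pow hpp s (n i) (hnne i))
  have hNH : ∀ s, Nat.card {x : H // p ^ s • (x : G) = 0} = p ^ b s := by
    intro s
    rw [card_H_torsion m hmne H eH (p ^ s)]
    simp only [hb]
    rw [← Finset.prod_pow_eq_pow_sum]
    exact Finset.prod_congr rfl (fun i _ => gcd_prime_pow hpp s (m i) (hmne i))
  have hcore := core_claims H hcyc (p := p) (q := p ^ t) hpp.pos
  have hpq : p * p ^ t = p ^ (t + 1) := by ring
  rw [hpq, hNG, hNG, hNH, hNH, ← pow_add, ← pow_add] at hcore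
  have h1 : b (t + 1) + a t ≤ a (t + 1) + b t :=
    (Nat.pow_le_pow_iff_right hpp.one_lt).mp hcore.1
  have h2 : a (t + 1) + b t ≤ (b (t + 1) + a t) + 1 := by
    have h3 := hcore.2
    rw [← pow_succ'] at h3
    exact (Nat.pow_le_pow_iff_right hpp.one_lt).mp h3
  have hstepa : a (t + 1) = a t + #{i : Fin r | p ^ (t + 1) ∣ n i} := by
    simp only [ha]
    rw [Finset.card_filter, ← Finset.sum_add_distrib]
    apply Finset.sum_congr rfl
    intro i _
    by_cases hdi : p ^ (t + 1) ∣ n i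
    · rw [if_pos hdi]
      have h4 := (Nat.Prime.pow_dvd_iff_le_factorization hpp (hnne i)).mp hdi
      omega
    · rw [if_neg hdi]
      have h5 : ¬ (t + 1 ≤ (n i).factorization p) :=
        fun hle => hdi ((Nat.Prime.pow_dvd_iff_le_factorization hpp (hnne i)).mpr hle)
      omega
  have hstepb : b (t + 1) = b t + #{i : Fin r' | p ^ (t + 1) ∣ m i} := by
    simp only [hb]
    rw [Finset.card_filter, ← Finset.sum_add_distrib]
    apply Finset.sum_congr rfl
    intro i _
    by_cases hdi : p ^ (t + 1) ∣ m i
    · rw [if_pos hdi]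
      have h4 := (Nat.Prime.pow_dvd_iff_le_factorization hpp (hmne i)).mp hdi
      omega
    · rw [if_neg hdi]
      have h5 : ¬ (t + 1 ≤ (m i).factorization p) :=
        fun hle => hdi ((Nat.Prime.pow_dvd_iff_le_factorization hpp (hmne i)).mpr hle)
      omega
  omega

end


end AuxiliaryLemmas

/-- Let `G` be a finite abelian group of rank `r` with invariant factors
`n_1 ≥ … ≥ n_r` (all `> 1`), and let `H` be a proper subgroup of `G` with cyclic factor
group `G ⧸ H`, with invariant factors `m_1 ≥ … ≥ m_{r'}`.  Then
`d*(G) ≥ d*(H) + [G : H] - 1`; moreover equality holds only if `r' = r - 1` and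
`H ≅ ⊕_{i ≠ j} C_{n_i}` for some `j`. -/
theorem dstar_subgroup_cyclic_quotient
    {G : Type*} [AddCommGroup G] [Fintype G]
    (r : ℕ) (n : Fin r → ℕ)
    (hgt : ∀ i, 1 < n i)
    (hchain : ∀ i j : Fin r, i ≤ j → n j ∣ n i)
    (hiso : Nonempty (G ≃+ ((i : Fin r) → ZMod (n i))))
    (H : AddSubgroup G) (hH : H ≠ ⊤) (hcyc : IsAddCyclic (G ⧸ H))
    (r' : ℕ) (m : Fin r' → ℕ)
    (hgt' : ∀ i, 1 < m i)
    (hchain' : ∀ i j : Fin r', i ≤ j → m j ∣ m i)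
    (hisoH : Nonempty (H ≃+ ((i : Fin r') → ZMod (m i)))) :
    ((∑ i, (m i - 1)) + H.index - 1 ≤ ∑ i, (n i - 1)) ∧
    ((∑ i, (n i - 1)) = (∑ i, (m i - 1)) + H.index - 1 →
      r' = r - 1 ∧
        ∃ j : Fin r, Nonempty (H ≃+ ((i : {i : Fin r // i ≠ j}) → ZMod (n i.1)))) := by
  classical
  obtain ⟨e⟩ := hiso
  obtain ⟨eH⟩ := hisoH
  have hn2 : ∀ i, 2 ≤ n i := hgt
  have hm2 : ∀ i, 2 ≤ m i := hgt'
  -- r ≥ 1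
  have hr : 0 < r := by
    rcases Nat.eq_zero_or_pos r with h0 | h
    · exfalso
      subst h0
      haveI : Subsingleton ((i : Fin 0) → ZMod (n i)) := ⟨fun a b => by funext i; exact absurd i.2 (by omega)⟩
      haveI : Subsingleton G := e.toEquiv.subsingleton
      exact hH (by
        apply (AddSubgroup.eq_top_iff' H).mpr
        intro x
        rw [Subsingleton.elim x 0]
        exact H.zero_mem)
    · exact h
  -- cardinalities
  have hcardG : Nat.card G = ∏ i, n i := by
    rw [Nat.card_congr e.toEquiv, Nat.card_pi]
    exact Finset.prod_congr rfl (fun i _ => Nat.card_zmod (n i))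
  have hcardH : Nat.card H = ∏ i, m i := by
    rw [Nat.card_congr eH.toEquiv, Nat.card_pi]
    exact Finset.prod_congr rfl (fun i _ => Nat.card_zmod (m i))
  set k := H.index with hkdef
  have hkprod : k * ∏ i, m i = ∏ i, n i := by
    rw [← hcardG, ← hcardH]
    exact AddSubgroup.index_mul_card H
  have hk2 : 2 ≤ k := by
    have h1 : k ≠ 0 := AddSubgroup.index_ne_zero_of_finite
    have h2 : k ≠ 1 := fun hc => hH (AddSubgroup.index_eq_one.mp hc)
    omega
  -- counting inequalities
  have hcd := fun (p : ℕ) (hpp : p.Prime) (t : ℕ) =>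
    counts_from_group n m hn2 hm2 e H eH hcyc p hpp t
  obtain ⟨hr'r, hrr', hdvdB, hchainB⟩ := stepB n m hn2 hm2 hchain hchain' hcd
  have hcase : r' = r ∨ r = r' + 1 := by
    have := hrr' hr
    omega
  rcases hcase with hEq | hEq
  · -- equal rank case : strict inequality
    subst hEq
    have hdvd2 : ∀ i : Fin r', m i ∣ n i := by
      intro i
      have := hdvdB i i.isLt
      rwa [Fin.eta] at this
    obtain ⟨_, h1, h2⟩ := arith_eq_rank r' n m k (fun i => by have := hn2 i; omega) hm2
      hdvd2 hchainB hkprod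
    have h3 := h2 hk2
    constructor
    · omega
    · intro heq
      exfalso
      omega
  · -- rank drop case
    subst hEq
    have hdvd2 : ∀ i : Fin r', m i ∣ n i.castSucc := by
      intro i
      have h5 := hdvdB i (by omega)
      have he : (⟨i.val, by omega⟩ : Fin (r' + 1)) = i.castSucc := by ext; simp
      rwa [he] at h5
    have hchain2 : ∀ i : Fin r', n i.succ ∣ m i := by
      intro i
      have h5 := hchainB i (by omega)
      have he : (⟨i.val + 1, by omega⟩ : Fin (r' + 1)) = i.succ := by ext; simp
      rwa [he] at h5
    obtain ⟨h0, h1, h2⟩ := arith_rank_pred r' n m k (fun i => by have := hn2 i; omega) hm2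
      hdvd2 hchain2 hkprod
    constructor
    · omega
    · intro heq
      have heq' : (∑ i, (m i - 1)) + k = (∑ i, (n i - 1)) + 1 := by omega
      obtain ⟨j, hj⟩ := h2 heq'
      refine ⟨by omega, j, ?_⟩
      -- build the isomorphism
      set σ := finSuccAboveEquiv j with hσ
      have hcomp : ∀ i : Fin r', m i = n ((σ.symm.symm i) : {x : Fin (r' + 1) // x ≠ j}).1 := by
        intro i
        rw [Equiv.symm_symm]
        have : ((σ i : {x : Fin (r' + 1) // x ≠ j}) : Fin (r' + 1)) = j.succAbove i := by
          rw [hσ, finSuccAboveEquiv_apply]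
        rw [this]
        exact hj i
      have E2 : ((i : Fin r') → ZMod (m i)) ≃+ ((x : {x : Fin (r' + 1) // x ≠ j}) → ZMod (n x.1)) :=
        AddEquiv.trans (AddEquiv.piCongrRight (fun i => zmodCongr (hcomp i)))
          (addPiCongrLeft' (fun x : {x : Fin (r' + 1) // x ≠ j} => ZMod (n x.1)) σ.symm).symm
      exact ⟨eH.trans E2⟩
end

section
/- Let G be a finite abelian group of rank r with invariant factors n_1,…,n_r, and let K be a nontrivial cyclic subgroup of G. Then d*(G) ≥ d*(G/K) + |K| − 1. Moreover, equality holds only if the rank of G/K equals r − 1 and G/K is isomorphic to the direct sum ⊕_{i ∈ {1,…,r}\{j}} C_{n_i} for some j ∈ {1,…,r}. -/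
open Finset AddSubgroup



private def sm (A : Type*) [AddCommGroup A] (d : ℕ) : A →+ A :=
  AddMonoidHom.mk' (fun x => d • x) (fun a b => smul_add d a b)

@[simp] private lemma sm_apply {A : Type*} [AddCommGroup A] (d : ℕ) (x : A) :
    sm A d x = d • x := rfl

/-- cardinality of `d • A` is an isomorphism invariant -/
private lemma card_range_sm_congr {A B : Type*} [AddCommGroup A] [AddCommGroup B]
    (e : A ≃+ B) (d : ℕ) :
    Nat.card (sm A d).range = Nat.card (sm B d).range := by
  have hmap : AddSubgroup.map e.toAddMonoidHom (sm A d).range = (sm B d).range := by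
    ext b
    simp only [AddSubgroup.mem_map, AddMonoidHom.mem_range, sm_apply]
    constructor
    · rintro ⟨a, ⟨y, rfl⟩, rfl⟩
      exact ⟨e y, by simp⟩
    · rintro ⟨y, rfl⟩
      exact ⟨d • e.symm y, ⟨e.symm y, rfl⟩, by simp⟩
  rw [← hmap]
  exact Nat.card_congr (AddSubgroup.equivMapOfInjective _ _ e.injective).toEquiv

/-- concrete cardinality of `d • Π ZMod (n i)` -/
private lemma card_range_sm_pi (r : ℕ) (n : Fin r → ℕ) (hn : ∀ i, 0 < n i) (d : ℕ) :
    Nat.card (sm ((i : Fin r) → ZMod (n i)) d).range = ∏ i, n i / Nat.gcd (n i) d := by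
  classical
  have hpi : (sm ((i : Fin r) → ZMod (n i)) d).range
      = AddSubgroup.pi Set.univ (fun i => (sm (ZMod (n i)) d).range) := by
    ext x
    simp only [AddMonoidHom.mem_range, sm_apply, AddSubgroup.mem_pi, Set.mem_univ,
      forall_true_left]
    constructor
    · rintro ⟨y, rfl⟩ i
      exact ⟨y i, by simp [Pi.smul_apply]⟩
    · intro h
      choose y hy using h
      exact ⟨y, by funext i; simpa using hy i⟩
  rw [hpi]
  have hequiv : (AddSubgroup.pi Set.univ (fun i => (sm (ZMod (n i)) d).range))
      ≃ ((i : Fin r) → (sm (ZMod (n i)) d).range) := by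
    refine ⟨fun x i => ⟨x.1 i, (AddSubgroup.mem_pi _).mp x.2 i (Set.mem_univ i)⟩,
      fun y => ⟨fun i => (y i).1, (AddSubgroup.mem_pi _).mpr (fun i _ => (y i).2)⟩,
      fun x => rfl, fun y => rfl⟩
  rw [Nat.card_congr hequiv, Nat.card_pi]
  refine Finset.prod_congr rfl (fun i _ => ?_)
  have hz : (sm (ZMod (n i)) d).range = AddSubgroup.zmultiples ((d : ℕ) : ZMod (n i)) := by
    haveI : NeZero (n i) := ⟨(hn i).ne'⟩
    ext x
    simp only [AddMonoidHom.mem_range, sm_apply]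
    constructor
    · rintro ⟨y, rfl⟩
      refine ⟨(y.val : ℤ), ?_⟩
      have hy : ((y.val : ℤ) : ZMod (n i)) = y := by
        simp [ZMod.natCast_val, ZMod.cast_id]
      simp only [zsmul_eq_mul, nsmul_eq_mul, hy]
      ring
    · rintro ⟨k, rfl⟩
      refine ⟨(k : ZMod (n i)), ?_⟩
      simp only [zsmul_eq_mul, nsmul_eq_mul]
      ring
  rw [hz, Nat.card_zmultiples, ZMod.addOrderOf_coe _ (hn i).ne']

private lemma card_range_sm_quotient {G : Type*} [AddCommGroup G] [Fintype G]
    (K : AddSubgroup G) (d : ℕ) :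
    Nat.card (sm G d).range
      = Nat.card (sm (G ⧸ K) d).range
        * Nat.card (K ⊓ (sm G d).range : AddSubgroup G) := by
  classical
  set π := QuotientAddGroup.mk' K with hπ
  set f := π.comp (sm G d).range.subtype with hf
  have hrange : f.range = (sm (G ⧸ K) d).range := by
    ext q
    simp only [AddMonoidHom.mem_range, hf, AddMonoidHom.comp_apply, AddSubgroup.coe_subtype]
    constructor
    · rintro ⟨⟨x, hx⟩, rfl⟩
      obtain ⟨y, rfl⟩ := hx
      exact ⟨π y, by simp [hπ, QuotientAddGroup.mk'_apply]⟩
    · rintro ⟨q, rfl⟩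
      obtain ⟨y, rfl⟩ := QuotientAddGroup.mk'_surjective K q
      exact ⟨⟨d • y, ⟨y, rfl⟩⟩, by simp [hπ]⟩
  have hkerequiv : (f.ker : Type _) ≃ (K ⊓ (sm G d).range : AddSubgroup G) := by
    refine ⟨fun x => ⟨x.1.1, AddSubgroup.mem_inf.mpr
        ⟨(QuotientAddGroup.eq_zero_iff _).mp x.2, x.1.2⟩⟩,
      fun y => ⟨⟨y.1, (AddSubgroup.mem_inf.mp y.2).2⟩, by
        simp only [hf, AddMonoidHom.mem_ker, AddMonoidHom.comp_apply, AddSubgroup.coe_subtype]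
        exact (QuotientAddGroup.eq_zero_iff _).mpr (AddSubgroup.mem_inf.mp y.2).1⟩,
      fun x => rfl, fun y => rfl⟩
  calc Nat.card (sm G d).range
      = Nat.card ((sm G d).range ⧸ f.ker) * Nat.card f.ker :=
        AddSubgroup.card_eq_card_quotient_mul_card_addSubgroup f.ker
    _ = Nat.card (sm (G ⧸ K) d).range * Nat.card (K ⊓ (sm G d).range : AddSubgroup G) := by
        rw [Nat.card_congr (QuotientAddGroup.quotientKerEquivRange f).toEquiv, hrange,
          Nat.card_congr hkerequiv]

private lemma range_sm_antitone {G : Type*} [AddCommGroup G] (p t : ℕ) :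
    (sm G (p^(t+1))).range ≤ (sm G (p^t)).range := by
  rintro x ⟨y, rfl⟩
  exact ⟨p • y, by simp [sm_apply, smul_smul, ← pow_succ]⟩

private lemma card_inf_le_mul {G : Type*} [AddCommGroup G] [Fintype G]
    (K : AddSubgroup G) (hcyc : IsAddCyclic K) (p t : ℕ) (hp : 0 < p) :
    Nat.card (K ⊓ (sm G (p^t)).range : AddSubgroup G)
      ≤ p * Nat.card (K ⊓ (sm G (p^(t+1))).range : AddSubgroup G) := by
  classical
  set S : AddSubgroup G := K ⊓ (sm G (p^t)).range with hS
  set S' : AddSubgroup G := K ⊓ (sm G (p^(t+1))).range with hS'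
  have hle : S ≤ K := inf_le_left
  haveI : IsAddCyclic K := hcyc
  haveI hSc : IsAddCyclic S := AddSubgroup.isAddCyclic_of_le hle
  have key : ∃ x, x ∈ S ∧ AddSubgroup.zmultiples x = S := by
    obtain ⟨g, hg⟩ := hSc.exists_generator
    refine ⟨g.1, g.2, le_antisymm (AddSubgroup.zmultiples_le.mpr g.2) ?_⟩
    intro xx hxx
    obtain ⟨k, hk⟩ := hg ⟨xx, hxx⟩
    exact ⟨k, by simpa using congrArg (Subtype.val) hk⟩
  obtain ⟨x, hxS, hzS⟩ := key
  have hcardS : Nat.card S = addOrderOf x := by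
    rw [← hzS]; exact Nat.card_zmultiples x
  obtain ⟨hgK, y, hy⟩ : x ∈ K ∧ ∃ y, p^t • y = x := by
    rw [hS, AddSubgroup.mem_inf] at hxS
    exact ⟨hxS.1, hxS.2⟩
  have hmem : p • x ∈ S' := by
    rw [hS', AddSubgroup.mem_inf]
    refine ⟨AddSubgroup.nsmul_mem K hgK p, ⟨y, ?_⟩⟩
    rw [sm_apply, ← hy, smul_smul, ← pow_succ']
  have hcard' : addOrderOf (p • x) ≤ Nat.card S' := by
    rw [← Nat.card_zmultiples]
    exact AddSubgroup.card_le_of_le (AddSubgroup.zmultiples_le.mpr hmem)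
  have hord : addOrderOf (p • x) = addOrderOf x / Nat.gcd (addOrderOf x) p :=
    addOrderOf_nsmul' _ hp.ne'
  set c := addOrderOf x with hc
  have hgd : Nat.gcd c p ∣ c := Nat.gcd_dvd_left _ _
  have hgdp : Nat.gcd c p ≤ p := Nat.le_of_dvd hp (Nat.gcd_dvd_right _ _)
  have h0 : 0 < Nat.gcd c p := Nat.gcd_pos_of_pos_right _ hp
  calc Nat.card S = c := hcardS
    _ = c / Nat.gcd c p * Nat.gcd c p := (Nat.div_mul_cancel hgd).symm
    _ ≤ Nat.card S' * p := Nat.mul_le_mul (by rw [← hord]; exact hcard') hgdp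
    _ = p * Nat.card S' := Nat.mul_comm _ _



private lemma factor_step (p s x : ℕ) (hp : p.Prime) (hx : 0 < x) :
    x / Nat.gcd x (p^s) = (if p^(s+1) ∣ x then p else 1) * (x / Nat.gcd x (p^(s+1))) := by
  by_cases h : p^(s+1) ∣ x
  · rw [if_pos h]
    have h1 : Nat.gcd x (p^(s+1)) = p^(s+1) := Nat.gcd_eq_right h
    have h2 : Nat.gcd x (p^s) = p^s :=
      Nat.gcd_eq_right (dvd_trans (pow_dvd_pow p (Nat.le_succ s)) h)
    rw [h1, h2]
    obtain ⟨y, rfl⟩ := h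
    rw [Nat.mul_div_cancel_left _ (pow_pos hp.pos (s+1))]
    rw [pow_succ, mul_assoc, Nat.mul_div_cancel_left _ (pow_pos hp.pos s)]
  · rw [if_neg h, one_mul]
    have heq : Nat.gcd x (p^(s+1)) = Nat.gcd x (p^s) := by
      apply Nat.dvd_antisymm
      · obtain ⟨j, hj, hje⟩ := (Nat.dvd_prime_pow hp).mp (Nat.gcd_dvd_right x (p^(s+1)))
        have hjs : j ≤ s := by
          rcases Nat.lt_or_ge j (s+1) with h' | h'
          · omega
          · exfalso
            apply h
            have hj1 : j = s + 1 := by omega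
            rw [← hj1, ← hje]
            exact Nat.gcd_dvd_left _ _
        exact Nat.dvd_gcd (Nat.gcd_dvd_left _ _) (hje ▸ pow_dvd_pow p hjs)
      · exact Nat.dvd_gcd (Nat.gcd_dvd_left _ _)
          (dvd_trans (Nat.gcd_dvd_right _ _) (pow_dvd_pow p (Nat.le_succ s)))
    rw [heq]

private lemma prod_div_gcd_step (r p s : ℕ) (hp : p.Prime) (f : ℕ → ℕ) (hf : ∀ i, 0 < f i) :
    ∏ i ∈ Finset.range r, (f i / Nat.gcd (f i) (p^s))
      = p ^ ((Finset.range r).filter (fun i => p^(s+1) ∣ f i)).card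
        * ∏ i ∈ Finset.range r, (f i / Nat.gcd (f i) (p^(s+1))) := by
  classical
  calc ∏ i ∈ Finset.range r, (f i / Nat.gcd (f i) (p^s))
      = ∏ i ∈ Finset.range r, ((if p^(s+1) ∣ f i then p else 1) * (f i / Nat.gcd (f i) (p^(s+1)))) :=
        Finset.prod_congr rfl (fun i _ => factor_step p s (f i) hp (hf i))
    _ = (∏ i ∈ Finset.range r, (if p^(s+1) ∣ f i then p else 1))
        * ∏ i ∈ Finset.range r, (f i / Nat.gcd (f i) (p^(s+1))) := Finset.prod_mul_distrib
    _ = p ^ ((Finset.range r).filter (fun i => p^(s+1) ∣ f i)).card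
        * ∏ i ∈ Finset.range r, (f i / Nat.gcd (f i) (p^(s+1))) := by
        congr 1
        rw [Finset.prod_ite (fun _ => p) (fun _ => (1:ℕ)), Finset.prod_const, Finset.prod_const,
          one_pow, mul_one]

private lemma count_seg (r : ℕ) (f : ℕ → ℕ) (p t : ℕ) (hp : 1 < p) (ht : 0 < t)
    (hchain : ∀ i j, i ≤ j → f j ∣ f i) (htop : ∀ i, r ≤ i → f i = 1) :
    ∀ i, (p^t ∣ f i ↔ i < ((Finset.range r).filter (fun i => p^t ∣ f i)).card) := by
  classical
  set S := (Finset.range r).filter (fun i => p^t ∣ f i) with hSdef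
  have hcardle : S.card ≤ r := by
    calc S.card ≤ (Finset.range r).card := Finset.card_le_card (Finset.filter_subset _ _)
      _ = r := Finset.card_range r
  have hdc : ∀ i j, i ≤ j → j ∈ S → i ∈ S := by
    intro i j hij hj
    rw [hSdef, Finset.mem_filter, Finset.mem_range] at *
    exact ⟨by omega, dvd_trans hj.2 (hchain i j hij)⟩
  have hsub : S ⊆ Finset.range S.card := by
    intro i hi
    rw [Finset.mem_range]
    by_contra hcon
    push_neg at hcon
    have h1 : Finset.range (i+1) ⊆ S := by
      intro x hx
      exact hdc x i (by rw [Finset.mem_range] at hx; omega) hi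
    have h2 := Finset.card_le_card h1
    rw [Finset.card_range] at h2
    omega
  have hS : S = Finset.range S.card :=
    Finset.eq_of_subset_of_card_le hsub (by rw [Finset.card_range])
  intro i
  constructor
  · intro hdvd
    rcases Nat.lt_or_ge i r with h | h
    · have hi : i ∈ S := by
        rw [hSdef, Finset.mem_filter, Finset.mem_range]
        exact ⟨h, hdvd⟩
      rw [hS, Finset.mem_range] at hi
      exact hi
    · exfalso
      rw [htop i h] at hdvd
      have h1 : p^t = 1 := Nat.eq_one_of_dvd_one hdvd
      have h2 : 1 < p^t := Nat.one_lt_pow ht.ne' hp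
      omega
  · intro hi
    have h1 : i ∈ S := by rw [hS]; exact Finset.mem_range.mpr hi
    rw [hSdef, Finset.mem_filter] at h1
    exact h1.2

/-- extract divisibility from prime-power counting inequalities -/
private lemma dvd_of_counts_le (a b : ℕ) (ha : 0 < a) (hb : 0 < b)
    (h : ∀ p t, p.Prime → 0 < t → p^t ∣ a → p^t ∣ b) : a ∣ b := by
  rw [← Nat.factorization_le_iff_dvd ha.ne' hb.ne', Finsupp.le_def]
  intro p
  rcases Nat.eq_zero_or_pos (a.factorization p) with h0 | h0
  · simp [h0]
  · have hp : p.Prime := by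
      apply Nat.prime_of_mem_primeFactors
      rw [← Nat.support_factorization]
      exact Finsupp.mem_support_iff.mpr h0.ne'
    have hd : p ^ (a.factorization p) ∣ b :=
      h p _ hp h0 (Nat.ordProj_dvd a p)
    exact (hp.pow_dvd_iff_le_factorization hb.ne').mp hd



lemma dstar_numeric (L k : ℕ) (n m : ℕ → ℕ)
    (hn0 : ∀ i, 0 < n i) (hm0 : ∀ i, 0 < m i)
    (hd1 : ∀ i, m i ∣ n i) (hd2 : ∀ i, n (i+1) ∣ m i)
    (hk : k * ∏ i ∈ Finset.range L, m i = ∏ i ∈ Finset.range L, n i)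
    (hnL : ∀ i, L ≤ i → n i = 1) (hmL : ∀ i, L ≤ i → m i = 1)
    (hk2 : 2 ≤ k) :
    (∑ i ∈ Finset.range L, (m i - 1)) + k - 1 ≤ ∑ i ∈ Finset.range L, (n i - 1) ∧
    ((∑ i ∈ Finset.range L, (n i - 1)) = (∑ i ∈ Finset.range L, (m i - 1)) + k - 1 →
      ∃ j, 1 < n j ∧ (∀ i, i < j → m i = n i) ∧ (∀ i, j ≤ i → m i = n (i+1))) := by
  classical
  set a : ℕ → ℕ := fun i => n i / m i with ha
  have ham : ∀ i, a i * m i = n i := fun i => Nat.div_mul_cancel (hd1 i)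
  have hmn : ∀ i, m i ≤ n i := fun i => Nat.le_of_dvd (hn0 i) (hd1 i)
  have ha1 : ∀ i, 1 ≤ a i := by
    intro i
    have := ham i
    rcases Nat.eq_zero_or_pos (a i) with h | h
    · rw [h] at this; simp at this; exact absurd this.symm (hn0 i).ne'
    · exact h
  set P : ℕ → ℕ := fun j => ∏ i ∈ Finset.Ico j L, a i with hP
  have hP1 : ∀ j, 1 ≤ P j := by
    intro j
    exact Finset.one_le_prod' (fun i _ => ha1 i)
  have hPL : ∀ j, L ≤ j → P j = 1 := by
    intro j hj
    simp [hP, Finset.Ico_eq_empty (by omega : ¬ j < L)]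
  have hPmul : ∀ j, j < L → P j = a j * P (j+1) := by
    intro j hj
    exact Finset.prod_eq_prod_Ico_succ_bot hj a
  have hprodmul : ∀ s, P s * ∏ i ∈ Finset.Ico s L, m i = ∏ i ∈ Finset.Ico s L, n i := by
    intro s
    rw [hP]
    rw [← Finset.prod_mul_distrib]
    exact Finset.prod_congr rfl (fun i _ => ham i)
  have hshift : ∀ s, (∏ i ∈ Finset.Ico s L, n (i+1)) = ∏ i ∈ Finset.Ico (s+1) L, n i := by
    intro s
    rcases le_or_gt L s with h | h
    · rw [Finset.Ico_eq_empty (by omega : ¬ s < L), Finset.Ico_eq_empty (by omega : ¬ s+1 < L)]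
      simp
    · have h1 : (∏ i ∈ Finset.Ico (s+1) (L+1), n i) = (∏ i ∈ Finset.Ico (s+1) L, n i) * n L :=
        Finset.prod_Ico_succ_top (by omega) n
      rw [hnL L le_rfl, mul_one] at h1
      rw [← h1]
      rw [Finset.prod_Ico_eq_prod_range, Finset.prod_Ico_eq_prod_range]
      have : L + 1 - (s + 1) = L - s := by omega
      rw [this]
      exact Finset.prod_congr rfl (fun i _ => by ring_nf)
  have hmlow : ∀ s, (∏ i ∈ Finset.Ico s L, n (i+1)) ≤ ∏ i ∈ Finset.Ico s L, m i := by
    intro s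
    exact Finset.prod_le_prod' (fun i _ => Nat.le_of_dvd (hm0 i) (hd2 i))
  have hPle : ∀ j, P (j+1) ≤ n (j+1) := by
    intro j
    rcases le_or_gt L (j+1) with h | h
    · rw [hPL _ h]; exact hn0 _
    · have h1 := hprodmul (j+1)
      have h2 : (∏ i ∈ Finset.Ico (j+2) L, n i) ≤ ∏ i ∈ Finset.Ico (j+1) L, m i := by
        rw [← hshift (j+1)]; exact hmlow (j+1)
      have h3 : (∏ i ∈ Finset.Ico (j+1) L, n i) = n (j+1) * ∏ i ∈ Finset.Ico (j+2) L, n i :=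
        Finset.prod_eq_prod_Ico_succ_bot h n
      have hpos : 0 < ∏ i ∈ Finset.Ico (j+2) L, n i :=
        Finset.prod_pos (fun i _ => hn0 i)
      have : P (j+1) * ∏ i ∈ Finset.Ico (j+2) L, n i ≤ n (j+1) * ∏ i ∈ Finset.Ico (j+2) L, n i := by
        calc P (j+1) * ∏ i ∈ Finset.Ico (j+2) L, n i
            ≤ P (j+1) * ∏ i ∈ Finset.Ico (j+1) L, m i := Nat.mul_le_mul_left _ h2
          _ = ∏ i ∈ Finset.Ico (j+1) L, n i := h1
          _ = n (j+1) * ∏ i ∈ Finset.Ico (j+2) L, n i := h3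
      exact Nat.le_of_mul_le_mul_right this hpos
  have hPm : ∀ j, P (j+1) ≤ m j := fun j => le_trans (hPle j) (Nat.le_of_dvd (hm0 j) (hd2 j))
  have hpa : P 0 = k := by
    have h1 := hprodmul 0
    rw [← Finset.range_eq_Ico] at h1
    rw [← hk] at h1
    have hpos : 0 < ∏ i ∈ Finset.range L, m i := Finset.prod_pos (fun i _ => hm0 i)
    exact Nat.eq_of_mul_eq_mul_right hpos h1
  -- telescoping
  have htel : ∀ d s, s + d = L → ∑ i ∈ Finset.Ico s L, (a i - 1) * P (i+1) = P s - 1 := by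
    intro d
    induction d with
    | zero => intro s hs; subst hs; simp [hPL s le_rfl]
    | succ d ih =>
      intro s hs
      have hsL : s < L := by omega
      rw [Finset.sum_eq_sum_Ico_succ_bot hsL]
      rw [ih (s+1) (by omega)]
      have h1 := hPmul s hsL
      have h2 := hP1 (s+1)
      have h3 : (a s - 1) * P (s+1) = a s * P (s+1) - P (s+1) := by
        rw [Nat.sub_one_mul]
      have h4 : P (s+1) ≤ a s * P (s+1) := Nat.le_mul_of_pos_left _ (ha1 s)
      omega
  have htel0 : ∑ i ∈ Finset.range L, (a i - 1) * P (i+1) = k - 1 := by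
    rw [Finset.range_eq_Ico, htel L 0 (by omega), hpa]
  have hterm : ∀ i, n i - m i = (a i - 1) * m i := by
    intro i
    rw [Nat.sub_one_mul, ham i]
  have hsplit : ∑ i ∈ Finset.range L, (n i - 1)
      = (∑ i ∈ Finset.range L, (m i - 1)) + ∑ i ∈ Finset.range L, (n i - m i) := by
    rw [← Finset.sum_add_distrib]
    exact Finset.sum_congr rfl (fun i _ => by have := hmn i; have := hm0 i; omega)
  have hgeterm : ∀ i, (a i - 1) * P (i+1) ≤ (a i - 1) * m i :=
    fun i => Nat.mul_le_mul_left _ (hPm i)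
  have hkey : k - 1 ≤ ∑ i ∈ Finset.range L, (n i - m i) := by
    rw [← htel0]
    apply Finset.sum_le_sum
    intro i _
    rw [hterm i]
    exact hgeterm i
  constructor
  · rw [hsplit]; omega
  · intro heq
    have heq2 : ∑ i ∈ Finset.range L, (n i - m i) = k - 1 := by
      rw [hsplit] at heq; omega
    have heq3 : ∑ i ∈ Finset.range L, (a i - 1) * P (i+1)
        = ∑ i ∈ Finset.range L, (a i - 1) * m i := by
      rw [htel0, ← heq2]
      exact Finset.sum_congr rfl (fun i _ => hterm i)
    have heqterm : ∀ i ∈ Finset.range L, (a i - 1) * P (i+1) = (a i - 1) * m i :=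
      (Finset.sum_eq_sum_iff_of_le (fun i _ => hgeterm i)).mp heq3
    have hdich : ∀ i, i < L → a i = 1 ∨ m i = P (i+1) := by
      intro i hi
      rcases Nat.eq_or_lt_of_le (ha1 i) with h | h
      · exact Or.inl h.symm
      · right
        have h2 := heqterm i (Finset.mem_range.mpr hi)
        have h3 : 0 < a i - 1 := by omega
        exact (Nat.eq_of_mul_eq_mul_left h3 h2).symm
    -- find least j with a j ≠ 1
    have hex : ∃ i, a i ≠ 1 := by
      by_contra hall
      push_neg at hall
      have : ∏ i ∈ Finset.range L, a i = 1 := Finset.prod_eq_one (fun i _ => hall i)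
      rw [Finset.range_eq_Ico] at this
      have h6 : k = 1 := by rw [← hpa]; exact this
      omega
    set j := Nat.find hex with hjdef
    have hja : a j ≠ 1 := Nat.find_spec hex
    have hjmin : ∀ i, i < j → a i = 1 := fun i hi => by
      have := Nat.find_min hex (m := i) hi
      simpa using this
    have hjL : j < L := by
      by_contra h
      push_neg at h
      have h1 : n j = 1 := hnL j h
      have h2 : m j = 1 := hmL j h
      have : a j = 1 := by
        have := ham j
        rw [h1, h2, mul_one] at this
        exact this
      exact hja this
    have hnj : 1 < n j := by
      have h1 := ham j
      have h2 : 2 ≤ a j := by have := ha1 j; omega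
      have := hm0 j
      nlinarith [h1, h2, hm0 j]
    have hmjP : m j = P (j+1) := by
      rcases hdich j hjL with h | h
      · exact absurd h hja
      · exact h
    have hmj : m j = n (j+1) := by
      have h1 : n (j+1) ≤ m j := Nat.le_of_dvd (hm0 j) (hd2 j)
      have h2 : m j ≤ n (j+1) := hmjP ▸ hPle j
      omega
    have hPj : P (j+1) = n (j+1) := by rw [← hmjP, hmj]
    -- products after j are forced
    have hprodeq : ∏ i ∈ Finset.Ico (j+1) L, m i = ∏ i ∈ Finset.Ico (j+1) L, n (i+1) := by
      rcases le_or_gt L (j+1) with h | h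
      · rw [Finset.Ico_eq_empty (by omega : ¬ j+1 < L)]
        simp
      · have h1 := hprodmul (j+1)
        rw [hPj] at h1
        have h3 : (∏ i ∈ Finset.Ico (j+1) L, n i) = n (j+1) * ∏ i ∈ Finset.Ico (j+2) L, n i :=
          Finset.prod_eq_prod_Ico_succ_bot h n
        rw [h3] at h1
        have h4 := Nat.eq_of_mul_eq_mul_left (hn0 (j+1)) h1
        rw [h4, hshift (j+1)]
    have hafter : ∀ i ∈ Finset.Ico (j+1) L, m i = n (i+1) := by
      intro i hi
      by_contra hne
      have hlt : n (i+1) < m i := by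
        have := Nat.le_of_dvd (hm0 i) (hd2 i)
        omega
      have : (∏ i ∈ Finset.Ico (j+1) L, n (i+1)) < ∏ i ∈ Finset.Ico (j+1) L, m i := by
        apply Finset.prod_lt_prod (fun i _ => hn0 (i+1)) (fun i _ => Nat.le_of_dvd (hm0 i) (hd2 i))
        exact ⟨i, hi, hlt⟩
      omega
    refine ⟨j, hnj, fun i hi => ?_, fun i hi => ?_⟩
    · have h1 := hjmin i hi
      have := ham i
      rw [h1, one_mul] at this
      exact this
    · rcases Nat.eq_or_lt_of_le hi with h | h
      · rw [← h]; exact hmj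
      · rcases le_or_gt L i with h2 | h2
        · rw [hmL i h2, hnL (i+1) (by omega)]
        · exact hafter i (Finset.mem_Ico.mpr ⟨h, h2⟩)


private def addEquivPiCongrLeft' {α β : Type*} (P : α → Type*) [∀ a, Add (P a)] (e : α ≃ β) :
    ((a : α) → P a) ≃+ ((b : β) → P (e.symm b)) :=
  { Equiv.piCongrLeft' P e with map_add' := fun _ _ => rfl }

/-- Let `G` be a finite abelian group of rank `r` with invariant factors
`n_1 ≥ … ≥ n_r` (all `> 1`), and let `K` be a nontrivial cyclic subgroup of `G`.
Let `m_1 ≥ … ≥ m_{r'}` be the invariant factors of `G ⧸ K`.  Then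
`d*(G) ≥ d*(G ⧸ K) + |K| - 1`; moreover equality holds only if `r' = r - 1` and
`G ⧸ K ≅ ⊕_{i ≠ j} C_{n_i}` for some `j`. -/
theorem dstar_quotient_cyclic_subgroup
    {G : Type*} [AddCommGroup G] [Fintype G]
    (r : ℕ) (n : Fin r → ℕ)
    (hgt : ∀ i, 1 < n i)
    (hchain : ∀ i j : Fin r, i ≤ j → n j ∣ n i)
    (hiso : Nonempty (G ≃+ ((i : Fin r) → ZMod (n i))))
    (K : AddSubgroup G) (hK : K ≠ ⊥) (hcyc : IsAddCyclic K)
    (r' : ℕ) (m : Fin r' → ℕ)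
    (hgt' : ∀ i, 1 < m i)
    (hchain' : ∀ i j : Fin r', i ≤ j → m j ∣ m i)
    (hisoQ : Nonempty ((G ⧸ K) ≃+ ((i : Fin r') → ZMod (m i)))) :
    ((∑ i, (m i - 1)) + Nat.card K - 1 ≤ ∑ i, (n i - 1)) ∧
    ((∑ i, (n i - 1)) = (∑ i, (m i - 1)) + Nat.card K - 1 →
      r' = r - 1 ∧
        ∃ j : Fin r, Nonempty ((G ⧸ K) ≃+ ((i : {i : Fin r // i ≠ j}) → ZMod (n i.1)))) := by
  classical
  obtain ⟨e⟩ := hiso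
  obtain ⟨eQ⟩ := hisoQ
  -- extended invariant factor sequences
  set n' : ℕ → ℕ := fun i => if h : i < r then n ⟨i, h⟩ else 1 with hn'def
  set m' : ℕ → ℕ := fun i => if h : i < r' then m ⟨i, h⟩ else 1 with hm'def
  have hn'lt : ∀ i (h : i < r), n' i = n ⟨i, h⟩ := fun i h => dif_pos h
  have hm'lt : ∀ i (h : i < r'), m' i = m ⟨i, h⟩ := fun i h => dif_pos h
  have hn'top : ∀ i, r ≤ i → n' i = 1 := fun i h => dif_neg (by omega)
  have hm'top : ∀ i, r' ≤ i → m' i = 1 := fun i h => dif_neg (by omega)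
  have hn'pos : ∀ i, 0 < n' i := by
    intro i
    by_cases h : i < r
    · rw [hn'lt i h]; have := hgt ⟨i, h⟩; omega
    · rw [hn'top i (by omega)]; omega
  have hm'pos : ∀ i, 0 < m' i := by
    intro i
    by_cases h : i < r'
    · rw [hm'lt i h]; have := hgt' ⟨i, h⟩; omega
    · rw [hm'top i (by omega)]; omega
  have hn'chain : ∀ i j, i ≤ j → n' j ∣ n' i := by
    intro i j hij
    by_cases hj : j < r
    · have hi : i < r := by omega
      rw [hn'lt i hi, hn'lt j hj]
      exact hchain ⟨i, hi⟩ ⟨j, hj⟩ hij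
    · rw [hn'top j (by omega)]; exact one_dvd _
  have hm'chain : ∀ i j, i ≤ j → m' j ∣ m' i := by
    intro i j hij
    by_cases hj : j < r'
    · have hi : i < r' := by omega
      rw [hm'lt i hi, hm'lt j hj]
      exact hchain' ⟨i, hi⟩ ⟨j, hj⟩ hij
    · rw [hm'top j (by omega)]; exact one_dvd _
  have hnfin : ∀ i : Fin r, n' i.1 = n i := fun i => hn'lt i.1 i.2
  have hmfin : ∀ i : Fin r', m' i.1 = m i := fun i => hm'lt i.1 i.2
  -- cardinalities
  have hGcard : Nat.card G = ∏ i ∈ Finset.range r, n' i := by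
    rw [Nat.card_congr e.toEquiv, Nat.card_pi,
      ← Fin.prod_univ_eq_prod_range n' r]
    exact Finset.prod_congr rfl (fun i _ => by rw [Nat.card_zmod, ← hnfin i])
  have hQcard : Nat.card (G ⧸ K) = ∏ i ∈ Finset.range r', m' i := by
    rw [Nat.card_congr eQ.toEquiv, Nat.card_pi,
      ← Fin.prod_univ_eq_prod_range m' r']
    exact Finset.prod_congr rfl (fun i _ => by rw [Nat.card_zmod, ← hmfin i])
  have htot : Nat.card G = Nat.card (G ⧸ K) * Nat.card K :=
    AddSubgroup.card_eq_card_quotient_mul_card_addSubgroup K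
  have hκ2 : 2 ≤ Nat.card K := (AddSubgroup.one_lt_card_iff_ne_bot K).mpr hK
  -- cardinalities of d-multiples
  have hX : ∀ d, Nat.card (sm G d).range = ∏ i ∈ Finset.range r, (n' i / Nat.gcd (n' i) d) := by
    intro d
    rw [card_range_sm_congr e d, card_range_sm_pi r n (fun i => by have := hgt i; omega) d,
      ← Fin.prod_univ_eq_prod_range (fun i => n' i / Nat.gcd (n' i) d) r]
    exact Finset.prod_congr rfl (fun i _ => by rw [hnfin i])
  have hY : ∀ d, Nat.card (sm (G ⧸ K) d).range
      = ∏ i ∈ Finset.range r', (m' i / Nat.gcd (m' i) d) := by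
    intro d
    rw [card_range_sm_congr eQ d, card_range_sm_pi r' m (fun i => by have := hgt' i; omega) d,
      ← Fin.prod_univ_eq_prod_range (fun i => m' i / Nat.gcd (m' i) d) r']
    exact Finset.prod_congr rfl (fun i _ => by rw [hmfin i])
  -- counting inequalities
  have hcount : ∀ p s, p.Prime →
      (((Finset.range r').filter (fun i => p^(s+1) ∣ m' i)).card
        ≤ ((Finset.range r).filter (fun i => p^(s+1) ∣ n' i)).card
      ∧ ((Finset.range r).filter (fun i => p^(s+1) ∣ n' i)).card
        ≤ ((Finset.range r').filter (fun i => p^(s+1) ∣ m' i)).card + 1) := by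
    intro p s hp
    set cN := ((Finset.range r).filter (fun i => p^(s+1) ∣ n' i)).card with hcNdef
    set cM := ((Finset.range r').filter (fun i => p^(s+1) ∣ m' i)).card with hcMdef
    set Y1 := ∏ i ∈ Finset.range r', (m' i / Nat.gcd (m' i) (p^(s+1))) with hY1def
    set ks := Nat.card (K ⊓ (sm G (p^s)).range : AddSubgroup G) with hksdef
    set ks1 := Nat.card (K ⊓ (sm G (p^(s+1))).range : AddSubgroup G) with hks1def
    have h1 : (∏ i ∈ Finset.range r, (n' i / Nat.gcd (n' i) (p^s)))
        = (∏ i ∈ Finset.range r', (m' i / Nat.gcd (m' i) (p^s))) * ks := by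
      rw [← hX, ← hY]; exact card_range_sm_quotient K _
    have h2 : (∏ i ∈ Finset.range r, (n' i / Nat.gcd (n' i) (p^(s+1)))) = Y1 * ks1 := by
      rw [hY1def, ← hX, ← hY]; exact card_range_sm_quotient K _
    have h3 := prod_div_gcd_step r p s hp n' hn'pos
    have h4 := prod_div_gcd_step r' p s hp m' hm'pos
    have h5 : ks1 ≤ ks :=
      AddSubgroup.card_le_of_le (inf_le_inf_left K (range_sm_antitone p s))
    have h6 : ks ≤ p * ks1 := card_inf_le_mul K hcyc p s hp.pos
    have hY1pos : 0 < Y1 := by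
      apply Finset.prod_pos
      intro i _
      exact Nat.div_pos (Nat.le_of_dvd (hm'pos i) (Nat.gcd_dvd_left _ _))
        (Nat.gcd_pos_of_pos_left _ (hm'pos i))
    have hks1pos : 0 < ks1 := Nat.card_pos
    have hcomb : Y1 * (p^cN * ks1) = Y1 * (p^cM * ks) := by
      calc Y1 * (p^cN * ks1) = p^cN * (Y1 * ks1) := by ring
        _ = p^cN * ∏ i ∈ Finset.range r, (n' i / Nat.gcd (n' i) (p^(s+1))) := by rw [h2]
        _ = ∏ i ∈ Finset.range r, (n' i / Nat.gcd (n' i) (p^s)) := by rw [h3]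
        _ = (∏ i ∈ Finset.range r', (m' i / Nat.gcd (m' i) (p^s))) * ks := h1
        _ = (p^cM * Y1) * ks := by rw [h4]
        _ = Y1 * (p^cM * ks) := by ring
    have hcomb2 : p^cN * ks1 = p^cM * ks := Nat.eq_of_mul_eq_mul_left hY1pos hcomb
    constructor
    · have hle : p^cM * ks1 ≤ p^cN * ks1 := by
        calc p^cM * ks1 ≤ p^cM * ks := Nat.mul_le_mul_left _ h5
          _ = p^cN * ks1 := hcomb2.symm
      have := Nat.le_of_mul_le_mul_right hle hks1pos
      exact (Nat.pow_le_pow_iff_right hp.one_lt).mp this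
    · have hle : p^cN * ks1 ≤ p^(cM+1) * ks1 := by
        calc p^cN * ks1 = p^cM * ks := hcomb2
          _ ≤ p^cM * (p * ks1) := Nat.mul_le_mul_left _ h6
          _ = p^(cM+1) * ks1 := by rw [pow_succ]; ring
      have := Nat.le_of_mul_le_mul_right hle hks1pos
      exact (Nat.pow_le_pow_iff_right hp.one_lt).mp this
  -- interlacing divisibilities
  have hd1 : ∀ i, m' i ∣ n' i := by
    intro i
    apply dvd_of_counts_le _ _ (hm'pos i) (hn'pos i)
    intro p t hp ht hdvd
    obtain ⟨s, rfl⟩ : ∃ s, t = s + 1 := ⟨t - 1, by omega⟩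
    have hsegM := count_seg r' m' p (s+1) hp.one_lt (by omega) hm'chain hm'top
    have hsegN := count_seg r n' p (s+1) hp.one_lt (by omega) hn'chain hn'top
    have hc := (hcount p s hp).1
    rw [hsegN i]
    have := (hsegM i).mp hdvd
    omega
  have hd2 : ∀ i, n' (i+1) ∣ m' i := by
    intro i
    apply dvd_of_counts_le _ _ (hn'pos (i+1)) (hm'pos i)
    intro p t hp ht hdvd
    obtain ⟨s, rfl⟩ : ∃ s, t = s + 1 := ⟨t - 1, by omega⟩
    have hsegM := count_seg r' m' p (s+1) hp.one_lt (by omega) hm'chain hm'top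
    have hsegN := count_seg r n' p (s+1) hp.one_lt (by omega) hn'chain hn'top
    have hc := (hcount p s hp).2
    rw [hsegM i]
    have := (hsegN (i+1)).mp hdvd
    omega
  have hrle : r ≤ r' + 1 := by
    by_contra hcon
    push_neg at hcon
    have hh := hd2 r'
    rw [hm'top r' le_rfl] at hh
    have h1 : n' (r'+1) = 1 := Nat.eq_one_of_dvd_one hh
    rw [hn'lt (r'+1) (by omega)] at h1
    have := hgt ⟨r'+1, by omega⟩
    omega
  -- extension to common length
  set L := r + r' with hLdef
  have hprodext : ∀ (f : ℕ → ℕ) (len : ℕ), (∀ i, len ≤ i → f i = 1) → len ≤ L →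
      (∏ i ∈ Finset.range L, f i) = ∏ i ∈ Finset.range len, f i := by
    intro f len hf hlen
    have h1 : (∏ i ∈ Finset.Ico len L, f i) = 1 :=
      Finset.prod_eq_one (fun i hi => hf i (Finset.mem_Ico.mp hi).1)
    rw [← Finset.prod_range_mul_prod_Ico f hlen, h1, mul_one]
  have hsumext : ∀ (f : ℕ → ℕ) (len : ℕ), (∀ i, len ≤ i → f i = 1) → len ≤ L →
      (∑ i ∈ Finset.range L, (f i - 1)) = ∑ i ∈ Finset.range len, (f i - 1) := by
    intro f len hf hlen
    have h1 : (∑ i ∈ Finset.Ico len L, (f i - 1)) = 0 :=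
      Finset.sum_eq_zero (fun i hi => by simp [hf i (Finset.mem_Ico.mp hi).1])
    rw [← Finset.sum_range_add_sum_Ico (fun i => f i - 1) hlen, h1, add_zero]
  have hkprod : Nat.card K * ∏ i ∈ Finset.range L, m' i = ∏ i ∈ Finset.range L, n' i := by
    rw [hprodext m' r' hm'top (by omega), hprodext n' r hn'top (by omega),
      ← hQcard, ← hGcard, htot]
    ring
  have hnum := dstar_numeric L (Nat.card K) n' m' hn'pos hm'pos hd1 hd2 hkprod
    (fun i hi => hn'top i (by omega)) (fun i hi => hm'top i (by omega)) hκ2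
  -- translate the sums
  have hsn : (∑ i, (n i - 1)) = ∑ i ∈ Finset.range L, (n' i - 1) := by
    rw [hsumext n' r hn'top (by omega),
      ← Fin.sum_univ_eq_sum_range (fun i => n' i - 1) r]
    exact Finset.sum_congr rfl (fun i _ => by rw [hnfin i])
  have hsm : (∑ i, (m i - 1)) = ∑ i ∈ Finset.range L, (m' i - 1) := by
    rw [hsumext m' r' hm'top (by omega),
      ← Fin.sum_univ_eq_sum_range (fun i => m' i - 1) r']
    exact Finset.sum_congr rfl (fun i _ => by rw [hmfin i])
  constructor
  · rw [hsn, hsm]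
    exact hnum.1
  · intro heq
    rw [hsn, hsm] at heq
    obtain ⟨j, hnj, hjlt, hjge⟩ := hnum.2 heq
    have hjr : j < r := by
      by_contra hcon
      push_neg at hcon
      rw [hn'top j hcon] at hnj
      omega
    have hr'eq : r' = r - 1 := by
      have h1 : r' ≤ r - 1 := by
        by_contra hcon
        push_neg at hcon
        have hh := hjge (r-1) (by omega)
        rw [show r - 1 + 1 = r by omega, hn'top r le_rfl, hm'lt (r-1) (by omega)] at hh
        have := hgt' ⟨r-1, by omega⟩
        omega
      omega
    refine ⟨hr'eq, ⟨⟨j, hjr⟩, ?_⟩⟩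
    set jf : Fin r := ⟨j, hjr⟩ with hjfdef
    have hrge2 : j + 1 ≤ r := by omega
    -- the reindexing bijection
    obtain ⟨e2, hval⟩ : ∃ e2 : {i : Fin r // i ≠ jf} ≃ Fin r',
        ∀ b : Fin r', n (e2.symm b).1 = m b := by
      refine ⟨⟨fun i => if h : i.1.1 < j then ⟨i.1.1, by omega⟩ else ⟨i.1.1 - 1, ?_⟩,
        fun b => if h : b.1 < j then ⟨⟨b.1, by omega⟩, ?_⟩ else ⟨⟨b.1 + 1, by omega⟩, ?_⟩,
        ?_, ?_⟩, ?_⟩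
      · have hne : i.1.1 ≠ j := fun hh => i.2 (Fin.ext hh)
        have := i.1.2
        omega
      · exact fun hh => by
          have h3 := congrArg Fin.val hh
          simp only [hjfdef, Fin.val_mk] at h3
          omega
      · exact fun hh => by
          have h3 := congrArg Fin.val hh
          simp only [hjfdef, Fin.val_mk] at h3
          omega
      · intro i
        have hne : i.1.1 ≠ j := fun hh => i.2 (Fin.ext hh)
        by_cases h : i.1.1 < j
        · simp only [dif_pos h]
        · simp only [dif_neg h]
          have h2 : ¬ (i.1.1 - 1 < j) := by omega
          simp only [dif_neg h2]
          exact Subtype.ext (Fin.ext (by simp; omega))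
      · intro b
        by_cases h : b.1 < j
        · simp only [dif_pos h]
        · simp only [dif_neg h]
          have h2 : ¬ (b.1 + 1 < j) := by omega
          simp only [dif_pos, dif_neg h2]
          exact Fin.ext (by simp)
      · -- the value property
        intro b
        simp only [Equiv.coe_fn_symm_mk]
        by_cases h : b.1 < j
        · simp only [dif_pos h]
          have h1 := hjlt b.1 h
          rw [hm'lt b.1 b.2, hn'lt b.1 (by omega)] at h1
          exact h1.symm
        · simp only [dif_neg h]
          have h1 := hjge b.1 (by omega)
          rw [hm'lt b.1 b.2, hn'lt (b.1+1) (by omega)] at h1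
          exact h1.symm
    have step1 := addEquivPiCongrLeft' (fun i : {i : Fin r // i ≠ jf} => ZMod (n i.1)) e2
    have step2 : ((b : Fin r') → ZMod (n (e2.symm b).1)) ≃+ ((b : Fin r') → ZMod (m b)) :=
      AddEquiv.piCongrRight (fun b => by rw [hval b])
    exact ⟨eQ.trans (step1.trans step2).symm⟩
end

section
/- Let G be a finite abelian group and a_1,…,a_k an arbitrary sequence of elements of G. Then the abelian group 𝒢(a_1,…,a_k) is generated by {m ∈ ℬ(a_1,…,a_k) : |m| ≤ d*(G) + 1}. -/
namespace ZSGen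
open AddSubgroup

attribute [local instance] Classical.propDecidable

/-! ### Analytic lemmas (Tomić-style weak log-majorization) -/

lemma key_log_ineq {a b : ℝ} (ha : 0 < a) (hb : 0 < b) :
    a - b ≤ a * (Real.log a - Real.log b) := by
  have h := Real.log_le_sub_one_of_pos (show 0 < b / a by positivity)
  rw [Real.log_div (ne_of_gt hb) (ne_of_gt ha)] at h
  have h2 : a * (Real.log b - Real.log a) ≤ a * (b / a - 1) :=
    mul_le_mul_of_nonneg_left h (le_of_lt ha)
  have h3 : a * (b / a) = b := by field_simp
  nlinarith [h2, h3]

open Finset in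
lemma tomic (M : ℕ) (x y : ℕ → ℝ)
    (hx1 : ∀ i, i < M → 1 ≤ x i) (hy1 : ∀ i, i < M → 1 ≤ y i)
    (hxa : ∀ i j, i ≤ j → j < M → x j ≤ x i)
    (hP : ∀ p, p ≤ M → ∏ i ∈ range p, x i ≤ ∏ i ∈ range p, y i) :
    ∑ i ∈ range M, x i ≤ ∑ i ∈ range M, y i := by
  rcases Nat.eq_zero_or_pos M with hM | hM
  · simp [hM]
  have hxpos : ∀ i, i < M → 0 < x i := fun i hi => lt_of_lt_of_le one_pos (hx1 i hi)
  have hypos : ∀ i, i < M → 0 < y i := fun i hi => lt_of_lt_of_le one_pos (hy1 i hi)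
  set d : ℕ → ℝ := fun i => Real.log (x i) - Real.log (y i) with hd
  set P : ℕ → ℝ := fun p => ∑ i ∈ range p, d i with hPdef
  have hPnonpos : ∀ p, p ≤ M → P p ≤ 0 := by
    intro p hp
    have hprod := hP p hp
    have hxp : (0:ℝ) < ∏ i ∈ range p, x i :=
      Finset.prod_pos (fun i hi => hxpos i (lt_of_lt_of_le (mem_range.1 hi) hp))
    have hyp : (0:ℝ) < ∏ i ∈ range p, y i :=
      Finset.prod_pos (fun i hi => hypos i (lt_of_lt_of_le (mem_range.1 hi) hp))
    have : P p = Real.log (∏ i ∈ range p, x i) - Real.log (∏ i ∈ range p, y i) := by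
      rw [hPdef]
      rw [Real.log_prod (fun i hi => ne_of_gt (hxpos i (lt_of_lt_of_le (mem_range.1 hi) hp))),
          Real.log_prod (fun i hi => ne_of_gt (hypos i (lt_of_lt_of_le (mem_range.1 hi) hp)))]
      rw [← Finset.sum_sub_distrib]
    rw [this, sub_nonpos]
    exact Real.log_le_log hxp hprod
  have main : ∀ p, p ≤ M → 0 < p →
      ∑ i ∈ range p, (x i - y i) ≤ x (p - 1) * P p := by
    intro p
    induction p with
    | zero => intro _ h; omega
    | succ q ihq =>
      intro hq _
      rcases Nat.eq_zero_or_pos q with hq0 | hq0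
      · subst hq0
        simp only [zero_add, Finset.sum_range_one, Nat.add_sub_cancel]
        have hP1 : P 1 = d 0 := by simp [hPdef]
        rw [hP1]
        exact key_log_ineq (hxpos 0 hM) (hypos 0 hM)
      · have hqM : q ≤ M := le_of_lt hq
        have hstep : ∑ i ∈ range (q+1), (x i - y i)
            = ∑ i ∈ range q, (x i - y i) + (x q - y q) := Finset.sum_range_succ _ _
        have hPstep : P (q+1) = P q + d q := Finset.sum_range_succ _ _
        have h1 : ∑ i ∈ range q, (x i - y i) ≤ x (q - 1) * P q := ihq hqM hq0
        have h2 : x (q - 1) * P q ≤ x q * P q := by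
          apply mul_le_mul_of_nonpos_right _ (hPnonpos q hqM)
          exact hxa (q-1) q (by omega) hq
        have h3 : x q - y q ≤ x q * d q := key_log_ineq (hxpos q hq) (hypos q hq)
        calc ∑ i ∈ range (q+1), (x i - y i) ≤ x q * P q + x q * d q := by
              rw [hstep]; exact add_le_add (le_trans h1 h2) h3
          _ = x (q+1-1) * P (q+1) := by rw [hPstep, Nat.add_sub_cancel]; ring
  have hfinal := main M le_rfl hM
  have hlast : x (M-1) * P M ≤ 0 :=
    mul_nonpos_of_nonneg_of_nonpos (le_of_lt (hxpos (M-1) (by omega))) (hPnonpos M le_rfl)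
  have : ∑ i ∈ range M, (x i - y i) ≤ 0 := le_trans hfinal hlast
  rw [Finset.sum_sub_distrib] at this
  linarith

open Finset in
lemma filter_lt_range (r q : ℕ) : (range r).filter (· < q) = range (min q r) := by
  ext i
  simp only [mem_filter, mem_range]
  omega

open Finset in
/-- the main arithmetic wrapper : from finset-product domination to sum domination -/
lemma arith_wrap {k r : ℕ} (C : Fin k → ℕ) (n : Fin r → ℕ)
    (hC1 : ∀ t, 1 ≤ C t) (hn1 : ∀ i, 1 ≤ n i)
    (H : ∀ S : Finset (Fin k), ∏ t ∈ S, C t ≤ ∏ i : Fin r, if i.val < S.card then n i else 1) :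
    ∑ t, (C t - 1) ≤ ∑ i, (n i - 1) := by
  classical
  set M := max k r with hM
  set σ := Tuple.sort (fun t => OrderDual.toDual (C t)) with hσ
  have hsort : ∀ s t : Fin k, s ≤ t → C (σ t) ≤ C (σ s) := by
    intro s t hst
    exact Tuple.monotone_sort (fun t => OrderDual.toDual (C t)) hst
  set nC : ℕ → ℕ := fun i => if h : i < k then C (σ ⟨i, h⟩) else 1 with hnC
  set ny : ℕ → ℕ := fun i => if h : i < r then n ⟨i, h⟩ else 1 with hny
  have hnC1 : ∀ i, 1 ≤ nC i := by
    intro i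
    simp only [hnC]
    by_cases h : i < k
    · rw [dif_pos h]; exact hC1 _
    · rw [dif_neg h]
  have hny1 : ∀ i, 1 ≤ ny i := by
    intro i
    simp only [hny]
    by_cases h : i < r
    · rw [dif_pos h]; exact hn1 _
    · rw [dif_neg h]
  have hPnat : ∀ p, ∏ i ∈ range p, nC i ≤ ∏ i ∈ range p, ny i := by
    intro p
    set q := min p k with hq
    have hqk : q ≤ k := min_le_right _ _
    have hqp : q ≤ p := min_le_left _ _
    have h1 : ∏ i ∈ range p, nC i = ∏ i ∈ range q, nC i := by
      rw [← Finset.prod_range_mul_prod_Ico nC hqp]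
      have : ∏ i ∈ Finset.Ico q p, nC i = 1 := by
        apply Finset.prod_eq_one
        intro i hi
        rcases Finset.mem_Ico.1 hi with ⟨h1, h2⟩
        have : ¬ i < k := by omega
        simp [hnC, dif_neg this]
      rw [this, mul_one]
    set e : Fin q → Fin k := fun s => σ (Fin.castLE hqk s) with he
    have hinj : Function.Injective e := by
      intro s s' hss'
      have h2 := σ.injective hss'
      have h3 : (Fin.castLE hqk s).val = (Fin.castLE hqk s').val := congrArg Fin.val h2
      exact Fin.ext h3
    set S : Finset (Fin k) := Finset.univ.image e with hS
    have hcard : S.card = q := by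
      rw [hS, Finset.card_image_of_injective _ hinj, Finset.card_univ, Fintype.card_fin]
    have h2 : ∏ i ∈ range q, nC i = ∏ t ∈ S, C t := by
      rw [hS, Finset.prod_image (fun s _ t _ h => hinj h)]
      rw [Finset.prod_range]
      refine Finset.prod_congr rfl (fun s _ => ?_)
      have hs : s.val < k := lt_of_lt_of_le s.isLt hqk
      simp only [hnC]
      rw [dif_pos hs]
      rfl
    have h3 : ∏ t ∈ S, C t ≤ ∏ i ∈ range (min q r), ny i := by
      calc ∏ t ∈ S, C t ≤ ∏ i : Fin r, if i.val < S.card then n i else 1 := H S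
        _ = ∏ i ∈ range r, (if i < q then ny i else 1) := by
            rw [Finset.prod_range]
            refine Finset.prod_congr rfl (fun i _ => ?_)
            rw [hcard]
            by_cases hiq : i.val < q
            · rw [if_pos hiq, if_pos hiq]
              simp [hny, dif_pos i.isLt]
            · rw [if_neg hiq, if_neg hiq]
        _ = ∏ i ∈ (range r).filter (· < q), ny i := (Finset.prod_filter _ _).symm
        _ = ∏ i ∈ range (min q r), ny i := by rw [filter_lt_range]
    have h4 : ∏ i ∈ range (min q r), ny i ≤ ∏ i ∈ range p, ny i := by
      apply Finset.prod_le_prod_of_subset_of_one_le'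
      · exact Finset.range_subset_range.2 (by omega)
      · intro i _ _
        exact hny1 i
    omega
  have htom := tomic M (fun i => (nC i : ℝ)) (fun i => (ny i : ℝ))
    (fun i _ => by exact_mod_cast hnC1 i)
    (fun i _ => by exact_mod_cast hny1 i)
    (fun i j hij hjM => by
      by_cases hj : j < k
      · have hi : i < k := lt_of_le_of_lt hij hj
        simp only [hnC]
        rw [dif_pos hj, dif_pos hi]
        exact_mod_cast hsort ⟨i, hi⟩ ⟨j, hj⟩ hij
      · simp only [hnC]
        rw [dif_neg hj]
        by_cases hi : i < k
        · rw [dif_pos hi]; exact_mod_cast hC1 _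
        · rw [dif_neg hi])
    (fun p _ => by
      push_cast
      exact_mod_cast hPnat p)
  have hsum : ∑ i ∈ range M, nC i ≤ ∑ i ∈ range M, ny i := by
    exact_mod_cast htom
  have hsC : ∑ i ∈ range M, nC i = (∑ t, C t) + (M - k) := by
    have hsplit : ∑ i ∈ range M, nC i = ∑ i ∈ range k, nC i + ∑ i ∈ Finset.Ico k M, nC i := by
      rw [Finset.range_eq_Ico, ← Finset.sum_Ico_consecutive _ (Nat.zero_le k) (le_max_left k r),
        ← Finset.range_eq_Ico]
    have h1 : ∑ i ∈ range k, nC i = ∑ t : Fin k, C (σ t) := by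
      rw [Finset.sum_range]
      refine Finset.sum_congr rfl (fun s _ => ?_)
      simp only [hnC]
      rw [dif_pos s.isLt]
    have h2 : ∑ t : Fin k, C (σ t) = ∑ t, C t := Equiv.sum_comp σ C
    have h3 : ∑ i ∈ Finset.Ico k M, nC i = M - k := by
      have hone : ∀ i ∈ Finset.Ico k M, nC i = 1 := by
        intro i hi
        rcases Finset.mem_Ico.1 hi with ⟨ha, _⟩
        have hnk : ¬ i < k := by omega
        simp [hnC, dif_neg hnk]
      rw [Finset.sum_congr rfl hone, Finset.sum_const, Nat.card_Ico, smul_eq_mul, mul_one]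
    rw [hsplit, h1, h2, h3]
  have hsY : ∑ i ∈ range M, ny i = (∑ i, n i) + (M - r) := by
    have hsplit : ∑ i ∈ range M, ny i = ∑ i ∈ range r, ny i + ∑ i ∈ Finset.Ico r M, ny i := by
      rw [Finset.range_eq_Ico, ← Finset.sum_Ico_consecutive _ (Nat.zero_le r) (le_max_right k r),
        ← Finset.range_eq_Ico]
    have h1 : ∑ i ∈ range r, ny i = ∑ i : Fin r, n i := by
      rw [Finset.sum_range]
      refine Finset.sum_congr rfl (fun s _ => ?_)
      simp only [hny]
      rw [dif_pos s.isLt]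
    have h3 : ∑ i ∈ Finset.Ico r M, ny i = M - r := by
      have hone : ∀ i ∈ Finset.Ico r M, ny i = 1 := by
        intro i hi
        rcases Finset.mem_Ico.1 hi with ⟨ha, _⟩
        have hnr : ¬ i < r := by omega
        simp [hny, dif_neg hnr]
      rw [Finset.sum_congr rfl hone, Finset.sum_const, Nat.card_Ico, smul_eq_mul, mul_one]
    rw [hsplit, h1, h3]
  have hCsum : ∑ t, (C t - 1) + k = ∑ t, C t := by
    have hh : ∀ t : Fin k, (C t - 1) + 1 = C t := fun t => by have := hC1 t; omega
    calc ∑ t, (C t - 1) + k = ∑ t : Fin k, ((C t - 1) + 1) := by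
          rw [Finset.sum_add_distrib, Finset.sum_const, Finset.card_univ, Fintype.card_fin,
            smul_eq_mul, mul_one]
      _ = ∑ t, C t := Finset.sum_congr rfl (fun t _ => hh t)
  have hnsum : ∑ i, (n i - 1) + r = ∑ i, n i := by
    have hh : ∀ i : Fin r, (n i - 1) + 1 = n i := fun i => by have := hn1 i; omega
    calc ∑ i, (n i - 1) + r = ∑ i : Fin r, ((n i - 1) + 1) := by
          rw [Finset.sum_add_distrib, Finset.sum_const, Finset.card_univ, Fintype.card_fin,
            smul_eq_mul, mul_one]
      _ = ∑ i, n i := Finset.sum_congr rfl (fun i _ => hh i)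
  have hkM : k ≤ M := le_max_left k r
  have hrM : r ≤ M := le_max_right k r
  omega

/-! ### Chain indices of a sequence in a finite abelian group -/

section ChainIdx

variable {G : Type*} [AddCommGroup G] [Finite G]

/-- subgroup generated by the strict prefix of a sequence before `t` -/
def pref {k : ℕ} (a : Fin k → G) (t : Fin k) : AddSubgroup G :=
  AddSubgroup.closure (a '' {s | s < t})

lemma exists_pos_nsmul_mem {k : ℕ} (a : Fin k → G) (t : Fin k) :
    ∃ c, 0 < c ∧ c • a t ∈ pref a t := by
  refine ⟨addOrderOf (a t), addOrderOf_pos (a t), ?_⟩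
  rw [addOrderOf_nsmul_eq_zero]
  exact zero_mem _

/-- minimal positive `c` with `c • a t` in the prefix subgroup -/
noncomputable def cIdx {k : ℕ} (a : Fin k → G) (t : Fin k) : ℕ :=
  Nat.find (exists_pos_nsmul_mem a t)

lemma cIdx_pos {k : ℕ} (a : Fin k → G) (t : Fin k) : 0 < cIdx a t :=
  (Nat.find_spec (exists_pos_nsmul_mem a t)).1

lemma cIdx_smul_mem {k : ℕ} (a : Fin k → G) (t : Fin k) : cIdx a t • a t ∈ pref a t :=
  (Nat.find_spec (exists_pos_nsmul_mem a t)).2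

lemma cIdx_min {k : ℕ} (a : Fin k → G) (t : Fin k) {j : ℕ} (h0 : 0 < j) (hj : j < cIdx a t) :
    j • a t ∉ pref a t := fun hmem => Nat.find_min (exists_pos_nsmul_mem a t) hj ⟨h0, hmem⟩

lemma cIdx_le {k : ℕ} (a : Fin k → G) (t : Fin k) {c : ℕ}
    (h : 0 < c ∧ c • a t ∈ pref a t) : cIdx a t ≤ c :=
  Nat.find_min' _ h

omit [Finite G] in
lemma pref_last {k : ℕ} (a : Fin (k+1) → G) :
    pref a (Fin.last k) = AddSubgroup.closure (Set.range (a ∘ Fin.castSucc)) := by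
  unfold pref
  congr 1
  ext x
  constructor
  · rintro ⟨s, hs, rfl⟩
    have hs' : s.val < k := by simpa [Fin.lt_def] using hs
    exact ⟨⟨s.val, hs'⟩, congrArg a (Fin.ext (by simp))⟩
  · rintro ⟨s, rfl⟩
    exact ⟨s.castSucc, by simp [Fin.lt_def, s.isLt], rfl⟩

omit [Finite G] in
lemma pref_castSucc {k : ℕ} (a : Fin (k+1) → G) (t : Fin k) :
    pref (a ∘ Fin.castSucc) t = pref a t.castSucc := by
  unfold pref
  congr 1
  ext x
  constructor
  · rintro ⟨s, hs, rfl⟩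
    refine ⟨s.castSucc, ?_, rfl⟩
    simp only [Set.mem_setOf_eq, Fin.lt_def] at hs ⊢
    simpa using hs
  · rintro ⟨s, hs, rfl⟩
    simp only [Set.mem_setOf_eq, Fin.lt_def, Fin.coe_castSucc] at hs
    have hs' : s.val < k := by have := t.isLt; omega
    refine ⟨⟨s.val, hs'⟩, ?_, congrArg a (Fin.ext (by simp))⟩
    show (⟨s.val, hs'⟩ : Fin k) < t
    rw [Fin.lt_def]
    exact hs

lemma cIdx_castSucc {k : ℕ} (a : Fin (k+1) → G) (t : Fin k) :
    cIdx (a ∘ Fin.castSucc) t = cIdx a t.castSucc := by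
  have hiff : ∀ c : ℕ, (0 < c ∧ c • (a ∘ Fin.castSucc) t ∈ pref (a ∘ Fin.castSucc) t)
      ↔ (0 < c ∧ c • a t.castSucc ∈ pref a t.castSucc) := by
    intro c
    rw [pref_castSucc]
    rfl
  unfold cIdx
  apply le_antisymm
  · exact Nat.find_min' _ ((hiff _).2 (Nat.find_spec (exists_pos_nsmul_mem a t.castSucc)))
  · exact Nat.find_min' _ ((hiff _).1 (Nat.find_spec (exists_pos_nsmul_mem (a ∘ Fin.castSucc) t)))

/-- greedy digit representation -/
lemma rep_exists : ∀ {k : ℕ} (a : Fin k → G) (g : G),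
    g ∈ AddSubgroup.closure (Set.range a) →
    ∃ v : Fin k → ℕ, (∀ t, v t < cIdx a t) ∧ ∑ t, v t • a t = g := by
  intro k
  induction k with
  | zero =>
    intro a g hg
    rw [show Set.range a = ∅ by simp, AddSubgroup.closure_empty, AddSubgroup.mem_bot] at hg
    exact ⟨Fin.elim0, fun t => t.elim0, by simp [hg]⟩
  | succ k ih =>
    intro a g hg
    have hle : AddSubgroup.closure (Set.range a) ≤
        AddSubgroup.closure (Set.range (a ∘ Fin.castSucc)) ⊔
          AddSubgroup.zmultiples (a (Fin.last k)) := by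
      rw [AddSubgroup.closure_le]
      rintro x ⟨i, rfl⟩
      refine Fin.lastCases ?_ ?_ i
      · exact AddSubgroup.mem_sup_right (AddSubgroup.mem_zmultiples _)
      · intro j
        exact AddSubgroup.mem_sup_left (AddSubgroup.subset_closure ⟨j, rfl⟩)
    rcases AddSubgroup.mem_sup.1 (hle hg) with ⟨y, hy, zz, hz, hyz⟩
    rcases AddSubgroup.mem_zmultiples_iff.1 hz with ⟨z, rfl⟩
    have hcpos : (0:ℤ) < ((cIdx a (Fin.last k) : ℕ):ℤ) := by
      exact_mod_cast cIdx_pos a (Fin.last k)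
    have hcb : ((cIdx a (Fin.last k) : ℕ):ℤ) • a (Fin.last k)
        ∈ AddSubgroup.closure (Set.range (a ∘ Fin.castSucc)) := by
      rw [← pref_last a, natCast_zsmul]
      exact cIdx_smul_mem a (Fin.last k)
    set c : ℕ := cIdx a (Fin.last k) with hc
    set ρ := z % (c:ℤ) with hρ
    have hρ0 : 0 ≤ ρ := Int.emod_nonneg z (by omega)
    have hρc : ρ < (c:ℤ) := Int.emod_lt_of_pos z hcpos
    have hdiv : z = (c:ℤ) * (z / (c:ℤ)) + ρ := (Int.mul_ediv_add_emod z (c:ℤ)).symm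
    have hg' : g - ρ • a (Fin.last k) ∈ AddSubgroup.closure (Set.range (a ∘ Fin.castSucc)) := by
      have heq : g - ρ • a (Fin.last k)
          = y + (z / (c:ℤ)) • (((c:ℤ)) • a (Fin.last k)) := by
        rw [← hyz, add_sub_assoc, ← sub_smul, ← mul_smul]
        congr 2
        rw [Int.mul_comm] at hdiv
        omega
      rw [heq]
      exact add_mem hy (zsmul_mem hcb _)
    rcases ih (a ∘ Fin.castSucc) (g - ρ • a (Fin.last k)) hg' with ⟨v', hv', hsum⟩
    simp only [Function.comp_apply] at hsum
    refine ⟨Fin.snoc v' ρ.toNat, ?_, ?_⟩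
    · intro t
      refine Fin.lastCases ?_ ?_ t
      · simpa [Fin.snoc_last] using (by omega : ρ.toNat < c)
      · intro j
        rw [Fin.snoc_castSucc, ← cIdx_castSucc]
        exact hv' j
    · rw [Fin.sum_univ_castSucc]
      simp only [Fin.snoc_castSucc, Fin.snoc_last]
      rw [hsum]
      have hnat : ρ.toNat • a (Fin.last k) = ρ • a (Fin.last k) := by
        rw [← natCast_zsmul, Int.toNat_of_nonneg hρ0]
      rw [hnat]
      abel

/-- uniqueness of digit representations -/
lemma rep_unique : ∀ {k : ℕ} (a : Fin k → G) (x y : Fin k → ℕ),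
    (∀ t, x t < cIdx a t) → (∀ t, y t < cIdx a t) →
    ∑ t, x t • a t = ∑ t, y t • a t → x = y := by
  intro k
  induction k with
  | zero => intro a x y _ _ _; funext t; exact t.elim0
  | succ k ih =>
    intro a x y hx hy hsum
    have hsum' : ∑ t : Fin k, x t.castSucc • a t.castSucc + x (Fin.last k) • a (Fin.last k)
        = ∑ t : Fin k, y t.castSucc • a t.castSucc + y (Fin.last k) • a (Fin.last k) := by
      rw [← Fin.sum_univ_castSucc (f := fun t => x t • a t),
          ← Fin.sum_univ_castSucc (f := fun t => y t • a t)]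
      exact hsum
    have hmemW' : ∀ u : Fin (k+1) → ℕ,
        ∑ t : Fin k, u t.castSucc • a t.castSucc ∈ pref a (Fin.last k) := by
      intro u
      rw [pref_last]
      exact sum_mem (fun t _ =>
        nsmul_mem (AddSubgroup.subset_closure (Set.mem_range_self (f := a ∘ Fin.castSucc) t)) _)
    have hlast : x (Fin.last k) = y (Fin.last k) := by
      by_contra hne
      set d : ℤ := (x (Fin.last k) : ℤ) - (y (Fin.last k) : ℤ) with hd
      have hdne : d ≠ 0 := by
        simp only [hd, sub_ne_zero]
        exact_mod_cast hne
      have hdmem : d • a (Fin.last k) ∈ pref a (Fin.last k) := by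
        have : d • a (Fin.last k)
            = ∑ t : Fin k, y t.castSucc • a t.castSucc
              - ∑ t : Fin k, x t.castSucc • a t.castSucc := by
          rw [hd, sub_smul, natCast_zsmul, natCast_zsmul, sub_eq_sub_iff_add_eq_add]
          rw [add_comm] at hsum'
          exact hsum'
        rw [this]
        exact sub_mem (hmemW' y) (hmemW' x)
      have hdlt : d.natAbs < cIdx a (Fin.last k) := by
        have h1 := hx (Fin.last k); have h2 := hy (Fin.last k)
        omega
      have hdpos : 0 < d.natAbs := by omega
      apply cIdx_min a (Fin.last k) hdpos hdlt
      rcases Int.natAbs_eq d with he | he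
      · have heq : (d.natAbs : ℕ) • a (Fin.last k) = d • a (Fin.last k) := by
          rw [← natCast_zsmul, ← he]
        rw [heq]
        exact hdmem
      · have heq : (d.natAbs : ℕ) • a (Fin.last k) = -(d • a (Fin.last k)) := by
          rw [← natCast_zsmul, ← neg_zsmul]
          congr 1
          omega
        rw [heq]
        exact neg_mem hdmem
    have hcancel : ∑ t : Fin k, x t.castSucc • a t.castSucc
        = ∑ t : Fin k, y t.castSucc • a t.castSucc := by
      have := hsum'
      rw [hlast] at this
      exact add_right_cancel this
    have hxy' : (fun t : Fin k => x t.castSucc) = (fun t => y t.castSucc) := by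
      apply ih (a ∘ Fin.castSucc)
      · intro t; rw [cIdx_castSucc]; exact hx t.castSucc
      · intro t; rw [cIdx_castSucc]; exact hy t.castSucc
      · simpa using hcancel
    funext t
    refine Fin.lastCases hlast ?_ t
    intro j
    exact congrFun hxy' j

/-- product of chain indices bounded by cardinality of the generated subgroup -/
lemma prod_cIdx_le_card {k : ℕ} (a : Fin k → G) :
    ∏ t, cIdx a t ≤ Nat.card ↥(AddSubgroup.closure (Set.range a)) := by
  have hinj : Function.Injective (fun v : ((t : Fin k) → Fin (cIdx a t)) =>
      (⟨∑ t, (v t).val • a t,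
        sum_mem (fun t _ => nsmul_mem (AddSubgroup.subset_closure (Set.mem_range_self t)) _)⟩ :
        ↥(AddSubgroup.closure (Set.range a)))) := by
    intro v v' hvv'
    have := rep_unique a (fun t => (v t).val) (fun t => (v' t).val)
      (fun t => (v t).isLt) (fun t => (v' t).isLt)
      (congrArg Subtype.val hvv')
    funext t
    exact Fin.ext (congrFun this t)
  calc ∏ t, cIdx a t = Nat.card ((t : Fin k) → Fin (cIdx a t)) := by
        rw [Nat.card_pi]; simp
    _ ≤ Nat.card ↥(AddSubgroup.closure (Set.range a)) :=
        Nat.card_le_card_of_injective _ hinj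

/-- cIdx of a subsequence dominates cIdx of the full sequence -/
lemma cIdx_le_subseq {k j : ℕ} (a : Fin k → G) (e : Fin j → Fin k) (hmono : StrictMono e)
    (s : Fin j) : cIdx a (e s) ≤ cIdx (a ∘ e) s := by
  apply cIdx_le
  obtain ⟨hpos, hmem⟩ := Nat.find_spec (exists_pos_nsmul_mem (a ∘ e) s)
  refine ⟨hpos, ?_⟩
  unfold pref at hmem ⊢
  refine AddSubgroup.closure_mono ?_ hmem
  rintro x ⟨u, hu, rfl⟩
  exact ⟨e u, hmono hu, rfl⟩

/-- product over any finset of chain indices bounded by card of the subgroup of a subsequence -/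
lemma prod_cIdx_finset_le {k : ℕ} (a : Fin k → G) (S : Finset (Fin k)) :
    ∏ t ∈ S, cIdx a t ≤
      Nat.card ↥(AddSubgroup.closure (Set.range
        (a ∘ (fun s : Fin S.card => (S.orderIsoOfFin rfl s).val)))) := by
  set e : Fin S.card → Fin k := fun s => (S.orderIsoOfFin rfl s).val with he
  have hmono : StrictMono e := fun s s' hss' => (S.orderIsoOfFin rfl).strictMono hss'
  calc ∏ t ∈ S, cIdx a t = ∏ s : Fin S.card, cIdx a (e s) := by
        rw [← Finset.prod_coe_sort S (cIdx a)]
        exact (Fintype.prod_equiv (S.orderIsoOfFin rfl).toEquiv _ _ (fun s => rfl)).symm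
    _ ≤ ∏ s : Fin S.card, cIdx (a ∘ e) s :=
        Finset.prod_le_prod' (fun s _ => cIdx_le_subseq a e hmono s)
    _ ≤ _ := prod_cIdx_le_card (a ∘ e)

end ChainIdx

/-! ### Cardinality bound for generated subgroups of `∏ ZMod (n i)` -/

section CardBound

variable {r : ℕ} {n : Fin r → ℕ} [∀ i, NeZero (n i)]

omit [∀ i, NeZero (n i)] in
lemma card_pi_subgroup {S : (i : Fin r) → AddSubgroup (ZMod (n i))} :
    Nat.card ↥(AddSubgroup.pi Set.univ S) = ∏ i, Nat.card ↥(S i) := by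
  have e : ↥(AddSubgroup.pi Set.univ S) ≃ ((i : Fin r) → ↥(S i)) :=
    { toFun := fun x i => ⟨x.1 i, x.2 i (Set.mem_univ i)⟩
      invFun := fun f => ⟨fun i => (f i).1, fun i _ => (f i).2⟩
      left_inv := fun x => rfl
      right_inv := fun f => rfl }
  rw [Nat.card_congr e, Nat.card_pi]

lemma card_closure_le (hchain : ∀ i j : Fin r, i ≤ j → n j ∣ n i)
    (j : ℕ) (w : Fin j → ((i : Fin r) → ZMod (n i))) :
    Nat.card ↥(AddSubgroup.closure (Set.range w)) ≤ ∏ i, if i.val < j then n i else 1 := by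
  by_cases hjr : j < r
  case neg =>
    have hall : ∀ i : Fin r, i.val < j := fun i => lt_of_lt_of_le i.isLt (le_of_not_gt hjr)
    calc Nat.card ↥(AddSubgroup.closure (Set.range w))
        ≤ Nat.card ((i : Fin r) → ZMod (n i)) :=
          Nat.card_le_card_of_injective _ Subtype.val_injective
      _ = ∏ i, n i := by
          rw [Nat.card_pi]; exact Finset.prod_congr rfl (fun i _ => Nat.card_zmod _)
      _ = ∏ i, if i.val < j then n i else 1 :=
          Finset.prod_congr rfl (fun i _ => (if_pos (hall i)).symm)
  case pos =>
    set W := AddSubgroup.closure (Set.range w) with hW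
    set jf : Fin r := ⟨j, hjr⟩ with hjf
    set m := n jf with hm
    have hm0 : m ≠ 0 := NeZero.ne _
    have hmpos : 0 < m := Nat.pos_of_ne_zero hm0
    set μ : ((i : Fin r) → ZMod (n i)) →+ ((i : Fin r) → ZMod (n i)) :=
      AddMonoidHom.mk' (fun x => m • x) (fun u v => smul_add m u v) with hμ
    set Wm := W.map μ with hWm
    have hWm_le_W : ∀ x ∈ Wm, x ∈ W := by
      rintro x ⟨u, hu, rfl⟩
      exact nsmul_mem hu m
    have stepA : Nat.card ↥W ≤ m ^ j * Nat.card ↥Wm := by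
      have hsurj : Function.Surjective (fun p : (Fin j → Fin m) × ↥Wm =>
          (⟨(∑ t, (p.1 t).val • w t) + p.2.val,
            add_mem (sum_mem (fun t _ => nsmul_mem (AddSubgroup.subset_closure
              (Set.mem_range_self t)) _)) (hWm_le_W _ p.2.2)⟩ : ↥W)) := by
        rintro ⟨g, hg⟩
        rw [hW, ← Submodule.span_int_eq_addSubgroupClosure, Submodule.mem_toAddSubgroup] at hg
        obtain ⟨y, hysum⟩ := (Submodule.mem_span_range_iff_exists_fun ℤ).1 hg
        have hmz : (0:ℤ) < (m:ℤ) := by exact_mod_cast hmpos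
        refine ⟨⟨fun t => ⟨(y t % (m:ℤ)).toNat, ?_⟩,
          ⟨μ (∑ t, (y t / (m:ℤ)) • w t), ⟨∑ t, (y t / (m:ℤ)) • w t,
            sum_mem (fun t _ => zsmul_mem (AddSubgroup.subset_closure (Set.mem_range_self t)) _),
            rfl⟩⟩⟩, ?_⟩
        · have h1 : 0 ≤ y t % (m:ℤ) := Int.emod_nonneg _ (by omega)
          have h2 : y t % (m:ℤ) < m := Int.emod_lt_of_pos _ hmz
          omega
        · apply Subtype.ext
          show (∑ t, ((y t % (m:ℤ)).toNat) • w t) + μ (∑ t, (y t / (m:ℤ)) • w t) = g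
          have hμsum : μ (∑ t, (y t / (m:ℤ)) • w t) = ∑ t, ((m:ℤ) * (y t / (m:ℤ))) • w t := by
            show m • (∑ t, (y t / (m:ℤ)) • w t) = _
            rw [Finset.smul_sum]
            refine Finset.sum_congr rfl (fun t _ => ?_)
            rw [← natCast_zsmul, smul_smul]
          rw [hμsum, ← Finset.sum_add_distrib, ← hysum]
          refine Finset.sum_congr rfl (fun t _ => ?_)
          have h1 : ((y t % (m:ℤ)).toNat) • w t = (y t % (m:ℤ)) • w t := by
            rw [← natCast_zsmul, Int.toNat_of_nonneg (Int.emod_nonneg _ (by omega))]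
          rw [h1, ← add_smul]
          congr 1
          exact Int.emod_add_mul_ediv _ _
      calc Nat.card ↥W ≤ Nat.card ((Fin j → Fin m) × ↥Wm) :=
            Nat.card_le_card_of_surjective _ hsurj
        _ = m ^ j * Nat.card ↥Wm := by
            rw [Nat.card_prod, Nat.card_pi]
            simp [Finset.prod_const]
    have stepB : Nat.card ↥Wm ≤ ∏ i, (n i / (n i).gcd m) := by
      have hle : Wm ≤ AddSubgroup.pi Set.univ
          (fun i => AddSubgroup.zmultiples ((m : ZMod (n i)))) := by
        rintro x ⟨u, hu, rfl⟩
        intro i _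
        show μ u i ∈ AddSubgroup.zmultiples ((m : ZMod (n i)))
        rw [AddSubgroup.mem_zmultiples_iff]
        refine ⟨((u i).val : ℤ), ?_⟩
        show ((u i).val : ℤ) • ((m:ℕ) : ZMod (n i)) = (m • u) i
        rw [Pi.smul_apply, zsmul_eq_mul, nsmul_eq_mul]
        push_cast
        rw [ZMod.natCast_val, ZMod.cast_id]
        ring
      calc Nat.card ↥Wm ≤ Nat.card ↥(AddSubgroup.pi Set.univ
            (fun i => AddSubgroup.zmultiples ((m : ZMod (n i))))) :=
            Nat.card_le_card_of_injective _ (AddSubgroup.inclusion_injective hle)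
        _ = ∏ i, (n i / (n i).gcd m) := by
            rw [card_pi_subgroup]
            refine Finset.prod_congr rfl (fun i _ => ?_)
            rw [Nat.card_zmultiples, ZMod.addOrderOf_coe m (NeZero.ne (n i))]
    have hdvd : ∀ i : Fin r, i.val < j → m ∣ n i := by
      intro i hi
      exact hchain i jf (by rw [Fin.le_def]; exact Nat.le_of_lt hi)
    have hdvd' : ∀ i : Fin r, ¬(i.val < j) → n i ∣ m := by
      intro i hi
      exact hchain jf i (by rw [Fin.le_def]; exact Nat.le_of_not_lt hi)
    have stepD : m ^ j * ∏ i, (n i / (n i).gcd m) = ∏ i : Fin r, if i.val < j then n i else 1 := by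
      have hpow : m ^ j = ∏ i : Fin r, if i.val < j then m else 1 := by
        rw [← Finset.prod_filter, Finset.prod_const]
        congr 1
        rw [show (Finset.univ.filter (fun i : Fin r => i.val < j)) = Finset.Iio jf by
          ext i; rw [Finset.mem_filter, Finset.mem_Iio, Fin.lt_def]
          exact ⟨fun h => h.2, fun h => ⟨Finset.mem_univ _, h⟩⟩]
        simp [hjf]
      rw [hpow, ← Finset.prod_mul_distrib]
      refine Finset.prod_congr rfl (fun i _ => ?_)
      by_cases hi : i.val < j
      · rw [if_pos hi, if_pos hi, Nat.gcd_eq_right (hdvd i hi)]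
        exact Nat.mul_div_cancel' (hdvd i hi)
      · rw [if_neg hi, if_neg hi, one_mul, Nat.gcd_eq_left (hdvd' i hi)]
        exact Nat.div_self (Nat.pos_of_ne_zero (NeZero.ne _))
    calc Nat.card ↥W ≤ m ^ j * Nat.card ↥Wm := stepA
      _ ≤ m ^ j * ∏ i, (n i / (n i).gcd m) := Nat.mul_le_mul_left _ stepB
      _ = _ := stepD

end CardBound

/-! ### Main induction -/

def snocHom (k : ℕ) : (Fin k → ℤ) →+ (Fin (k+1) → ℤ) :=
  AddMonoidHom.mk' (fun u => Fin.snoc u 0) (by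
    intro u v
    funext i
    refine Fin.lastCases ?_ ?_ i
    · simp
    · intro t; simp)

section MainInd

variable {G : Type*} [AddCommGroup G] [Finite G]

/-- easy direction : everything in the closure is a zero-sum vector -/
lemma closure_sub {k : ℕ} (a : Fin k → G) (d : ℕ) :
    (AddSubgroup.closure ((fun (m : Fin k → ℕ) (i : Fin k) => ((m i : ℤ))) ''
      {m : Fin k → ℕ | (∑ i, m i • a i = 0) ∧ ∑ i, m i ≤ d}))
    ≤ AddMonoidHom.ker (AddMonoidHom.mk' (fun m : Fin k → ℤ => ∑ i, m i • a i)
        (fun u v => by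
          simp only [Pi.add_apply, add_smul]
          rw [Finset.sum_add_distrib])) := by
  rw [AddSubgroup.closure_le]
  rintro x ⟨u, ⟨husum, _⟩, rfl⟩
  simp only [SetLike.mem_coe, AddMonoidHom.mem_ker, AddMonoidHom.mk'_apply]
  show ∑ i, (u i : ℤ) • a i = 0
  rw [← husum]
  exact Finset.sum_congr rfl (fun i _ => natCast_zsmul _ _)

theorem main_ind (N : ℕ)
    (hN : ∀ (k : ℕ) (a : Fin k → G), (∑ t, (cIdx a t - 1)) + 1 ≤ N) :
    ∀ (k : ℕ) (a : Fin k → G), ZeroSumGeneratedBy a N := by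
  intro k
  induction k with
  | zero =>
    intro a
    unfold ZeroSumGeneratedBy
    ext m
    simp only [SetLike.mem_coe, Set.mem_setOf_eq]
    constructor
    · intro _; simp
    · intro _
      have hm0 : m = 0 := funext fun i => i.elim0
      rw [hm0]; exact zero_mem _
  | succ k ih =>
    intro a
    have hcpos : 0 < cIdx a (Fin.last k) := cIdx_pos a _
    have hcbW : cIdx a (Fin.last k) • a (Fin.last k)
        ∈ AddSubgroup.closure (Set.range (a ∘ Fin.castSucc)) := by
      rw [← pref_last]; exact cIdx_smul_mem a _
    obtain ⟨v, hvlt, hvsum⟩ := rep_exists (a ∘ Fin.castSucc)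
      (-(cIdx a (Fin.last k) • a (Fin.last k))) (neg_mem hcbW)
    set c := cIdx a (Fin.last k) with hc
    set w : Fin (k+1) → ℕ := Fin.snoc v c with hw
    have hwzero : ∑ t, w t • a t = 0 := by
      rw [Fin.sum_univ_castSucc]
      simp only [hw, Fin.snoc_castSucc, Fin.snoc_last]
      have hvs : ∑ t : Fin k, v t • a t.castSucc = -(c • a (Fin.last k)) := hvsum
      rw [hvs]
      simp
    have hwlen : ∑ t, w t ≤ N := by
      have h1 : ∑ t : Fin (k+1), w t = ∑ t : Fin k, v t + c := by
        rw [Fin.sum_univ_castSucc]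
        simp [hw]
      have h2 : ∀ t : Fin k, v t ≤ cIdx a t.castSucc - 1 := fun t => by
        have hlt := hvlt t
        rw [cIdx_castSucc] at hlt
        have := cIdx_pos a t.castSucc
        omega
      calc ∑ t, w t = ∑ t : Fin k, v t + c := h1
        _ ≤ (∑ t : Fin k, (cIdx a t.castSucc - 1)) + ((cIdx a (Fin.last k) - 1) + 1) := by
            exact Nat.add_le_add (Finset.sum_le_sum (fun t _ => h2 t)) (by omega)
        _ = (∑ t : Fin (k+1), (cIdx a t - 1)) + 1 := by
            rw [Fin.sum_univ_castSucc (f := fun t => cIdx a t - 1)]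
            omega
        _ ≤ N := hN (k+1) a
    unfold ZeroSumGeneratedBy
    ext m
    simp only [SetLike.mem_coe, Set.mem_setOf_eq]
    constructor
    · intro hm
      have := closure_sub a N hm
      simpa using this
    · intro hm
      have hmlast : m (Fin.last k) • a (Fin.last k)
          ∈ AddSubgroup.closure (Set.range (a ∘ Fin.castSucc)) := by
        have heq : m (Fin.last k) • a (Fin.last k)
            = - ∑ t : Fin k, m t.castSucc • a t.castSucc := by
          rw [Fin.sum_univ_castSucc] at hm
          exact eq_neg_of_add_eq_zero_right hm
        rw [heq]
        exact neg_mem (sum_mem (fun t _ => zsmul_mem (AddSubgroup.subset_closure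
          (Set.mem_range_self (f := a ∘ Fin.castSucc) t)) _))
      have hcz : ((c:ℕ):ℤ) • a (Fin.last k)
          ∈ AddSubgroup.closure (Set.range (a ∘ Fin.castSucc)) := by
        rw [natCast_zsmul]
        exact hcbW
      have hdvd : ((c:ℕ):ℤ) ∣ m (Fin.last k) := by
        by_contra hnd
        have hρ0 : 0 ≤ m (Fin.last k) % (c:ℤ) := Int.emod_nonneg _ (by exact_mod_cast hcpos.ne')
        have hρc : m (Fin.last k) % (c:ℤ) < (c:ℤ) :=
          Int.emod_lt_of_pos _ (by exact_mod_cast hcpos)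
        have hρne : m (Fin.last k) % (c:ℤ) ≠ 0 := fun h => hnd (Int.dvd_of_emod_eq_zero h)
        have hρmem : (m (Fin.last k) % (c:ℤ)) • a (Fin.last k)
            ∈ AddSubgroup.closure (Set.range (a ∘ Fin.castSucc)) := by
          have hdec : (m (Fin.last k) % (c:ℤ)) • a (Fin.last k)
              = m (Fin.last k) • a (Fin.last k)
                - (m (Fin.last k) / (c:ℤ)) • (((c:ℕ):ℤ) • a (Fin.last k)) := by
            rw [← mul_smul, ← sub_smul]
            congr 1
            have hde := Int.mul_ediv_add_emod (m (Fin.last k)) (c:ℤ)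
            rw [Int.mul_comm] at hde
            omega
          rw [hdec]
          exact sub_mem hmlast (zsmul_mem hcz _)
        apply cIdx_min a (Fin.last k) (j := (m (Fin.last k) % (c:ℤ)).toNat) (by omega) (by omega)
        rw [pref_last]
        have heq2 : ((m (Fin.last k) % (c:ℤ)).toNat : ℕ) • a (Fin.last k)
            = (m (Fin.last k) % (c:ℤ)) • a (Fin.last k) := by
          rw [← natCast_zsmul, Int.toNat_of_nonneg hρ0]
        rw [heq2]
        exact hρmem
      obtain ⟨q, hq⟩ := hdvd
      set wz : Fin (k+1) → ℤ := fun i => (w i : ℤ) with hwz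
      set m' : Fin (k+1) → ℤ := m - q • wz with hm'
      have hm'last : m' (Fin.last k) = 0 := by
        simp only [hm', Pi.sub_apply, Pi.smul_apply, hwz, hw, Fin.snoc_last, smul_eq_mul]
        rw [hq]
        ring
      have hwzsum : ∑ t, wz t • a t = 0 := by
        have hterm : ∀ t, wz t • a t = w t • a t := fun t => natCast_zsmul _ _
        rw [Finset.sum_congr rfl (fun t _ => hterm t)]
        exact hwzero
      have hm''sum : ∑ t : Fin k, m' t.castSucc • a t.castSucc = 0 := by
        have hsum' : ∑ t : Fin (k+1), m' t • a t = 0 := by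
          have hexp : ∀ t, m' t • a t = m t • a t - q • (wz t • a t) := fun t => by
            simp only [hm', Pi.sub_apply, Pi.smul_apply, sub_smul, smul_eq_mul, mul_smul]
          rw [Finset.sum_congr rfl (fun t _ => hexp t), Finset.sum_sub_distrib, hm,
            ← Finset.smul_sum, hwzsum]
          simp
        rw [Fin.sum_univ_castSucc, hm'last, zero_smul, add_zero] at hsum'
        exact hsum'
      have hIH := ih (a ∘ Fin.castSucc)
      unfold ZeroSumGeneratedBy at hIH
      have hm''mem : (m' ∘ Fin.castSucc) ∈ AddSubgroup.closure
          ((fun (mm : Fin k → ℕ) (i : Fin k) => ((mm i : ℤ))) ''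
            {mm : Fin k → ℕ | (∑ i, mm i • (a ∘ Fin.castSucc) i = 0) ∧ ∑ i, mm i ≤ N}) := by
        have hmem : (m' ∘ Fin.castSucc) ∈ {mm : Fin k → ℤ | ∑ i, mm i • (a ∘ Fin.castSucc) i = 0} :=
          hm''sum
        rw [← hIH] at hmem
        exact hmem
      have hEmem : m' ∈ AddSubgroup.closure
          ((fun (mm : Fin (k+1) → ℕ) (i : Fin (k+1)) => ((mm i : ℤ))) ''
            {mm : Fin (k+1) → ℕ | (∑ i, mm i • a i = 0) ∧ ∑ i, mm i ≤ N}) := by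
        have hm'E : (snocHom k) (m' ∘ Fin.castSucc) = m' := by
          funext i
          simp only [snocHom, AddMonoidHom.mk'_apply]
          refine Fin.lastCases ?_ ?_ i
          · rw [Fin.snoc_last, hm'last]
          · intro t
            rw [Fin.snoc_castSucc]
            rfl
        rw [← hm'E]
        have hmap : (snocHom k) (m' ∘ Fin.castSucc) ∈ AddSubgroup.map (snocHom k)
            (AddSubgroup.closure _) := AddSubgroup.mem_map_of_mem _ hm''mem
        rw [AddMonoidHom.map_closure] at hmap
        refine AddSubgroup.closure_mono ?_ hmap
        rintro x ⟨u, ⟨uu, ⟨huz, hul⟩, rfl⟩, rfl⟩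
        refine ⟨Fin.snoc uu 0, ⟨?_, ?_⟩, ?_⟩
        · rw [Fin.sum_univ_castSucc]
          simp only [Fin.snoc_castSucc, Fin.snoc_last, zero_smul, add_zero]
          exact huz
        · rw [Fin.sum_univ_castSucc]
          simp only [Fin.snoc_castSucc, Fin.snoc_last, add_zero]
          exact hul
        · funext i
          simp only [snocHom, AddMonoidHom.mk'_apply]
          refine Fin.lastCases ?_ ?_ i
          · rw [Fin.snoc_last, Fin.snoc_last]
            simp
          · intro t
            rw [Fin.snoc_castSucc, Fin.snoc_castSucc]
      have hwmem : wz ∈ AddSubgroup.closure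
          ((fun (mm : Fin (k+1) → ℕ) (i : Fin (k+1)) => ((mm i : ℤ))) ''
            {mm : Fin (k+1) → ℕ | (∑ i, mm i • a i = 0) ∧ ∑ i, mm i ≤ N}) :=
        AddSubgroup.subset_closure ⟨w, ⟨hwzero, hwlen⟩, rfl⟩
      have hfin : m = m' + q • wz := by
        funext i
        simp [hm']
      rw [hfin]
      exact add_mem hEmem (zsmul_mem hwmem q)

end MainInd

end ZSGen

/-- For a finite abelian group `G` with invariant factors `n_1,…,n_r` and any sequence
`a_1,…,a_k` of elements of `G`, the abelian group `𝓖(a_1,…,a_k)` is generated by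
`{m ∈ 𝓑(a_1,…,a_k) : |m| ≤ d*(G) + 1}`, where `d*(G) = (n_1 - 1) + … + (n_r - 1)`. -/
theorem zeroSum_generated_dstar_add_one
    {G : Type*} [AddCommGroup G] [Fintype G]
    (r : ℕ) (n : Fin r → ℕ)
    (hgt : ∀ i, 1 < n i)
    (hchain : ∀ i j : Fin r, i ≤ j → n j ∣ n i)
    (hiso : Nonempty (G ≃+ ((i : Fin r) → ZMod (n i))))
    (k : ℕ) (a : Fin k → G) :
    ZeroSumGeneratedBy a ((∑ i, (n i - 1)) + 1) := by
  classical
  obtain ⟨e⟩ := hiso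
  haveI hnz : ∀ i, NeZero (n i) := fun i => ⟨by have := hgt i; omega⟩
  haveI hfin : Finite ((i : Fin r) → ZMod (n i)) := by
    haveI : ∀ i, Finite (ZMod (n i)) := fun i => by
      haveI := hnz i
      infer_instance
    infer_instance
  -- the bound on chain indices
  have hN : ∀ (k' : ℕ) (b : Fin k' → ((i : Fin r) → ZMod (n i))),
      (∑ t, (ZSGen.cIdx b t - 1)) + 1 ≤ (∑ i, (n i - 1)) + 1 := by
    intro k' b
    have hsum : ∑ t, (ZSGen.cIdx b t - 1) ≤ ∑ i, (n i - 1) := by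
      apply ZSGen.arith_wrap (fun t => ZSGen.cIdx b t) n
        (fun t => ZSGen.cIdx_pos b t) (fun i => le_of_lt (hgt i))
      intro S
      calc ∏ t ∈ S, ZSGen.cIdx b t
          ≤ Nat.card ↥(AddSubgroup.closure (Set.range
            (b ∘ (fun s : Fin S.card => (S.orderIsoOfFin rfl s).val)))) :=
            ZSGen.prod_cIdx_finset_le b S
        _ ≤ ∏ i, if i.val < S.card then n i else 1 :=
            ZSGen.card_closure_le hchain S.card _
    omega
  -- theorem for the concrete group
  have hhat := ZSGen.main_ind ((∑ i, (n i - 1)) + 1) hN k (⇑e ∘ a)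
  -- transfer back along the isomorphism
  unfold ZeroSumGeneratedBy at hhat ⊢
  have hsetN : {m : Fin k → ℕ | (∑ i, m i • (⇑e ∘ a) i = 0) ∧ ∑ i, m i ≤ (∑ i, (n i - 1)) + 1}
      = {m : Fin k → ℕ | (∑ i, m i • a i = 0) ∧ ∑ i, m i ≤ (∑ i, (n i - 1)) + 1} := by
    ext m
    simp only [Set.mem_setOf_eq, and_congr_left_iff]
    intro _
    rw [show ∑ i, m i • (⇑e ∘ a) i = e (∑ i, m i • a i) by
      rw [map_sum]
      exact Finset.sum_congr rfl (fun i _ => (map_nsmul e _ _).symm)]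
    constructor
    · intro h
      exact e.injective (h.trans (map_zero e).symm)
    · intro h
      rw [h, map_zero]
  have hsetZ : {m : Fin k → ℤ | ∑ i, m i • (⇑e ∘ a) i = 0}
      = {m : Fin k → ℤ | ∑ i, m i • a i = 0} := by
    ext m
    simp only [Set.mem_setOf_eq]
    rw [show ∑ i, m i • (⇑e ∘ a) i = e (∑ i, m i • a i) by
      rw [map_sum]
      exact Finset.sum_congr rfl (fun i _ => (map_zsmul e _ _).symm)]
    constructor
    · intro h
      exact e.injective (h.trans (map_zero e).symm)
    · intro h
      rw [h, map_zero]
  rw [hsetN, hsetZ] at hhat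
  exact hhat
end
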